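/- arXiv:math/0311099 — 10 statements merged into one kernel-verified Lean document; each statement's English description precedes it below -/
import Mathlib

section
/- Let F be a field, A a commutative group (written additively), and s an A-valued symbol on F. Then s(x, y) + s(y, x) = 0 for all x, y ∈ Fˣ. -/
/-- An `A`-valued symbol on the field `F`: a `ℤ`-bilinear map on `Fˣ × Fˣ`
vanishing on pairs `(x, y)` with `x + y = 1`. -/
def IsAddSymbol {F A : Type*} [Field F] [AddCommGroup A] (s : Fˣ → Fˣ → A) : Prop :=
  (∀ x x' y : Fˣ, s (x * x') y = s x y + s x' y) ∧
  (∀ x y y' : Fˣ, s x (y * y') = s x y + s x y') ∧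
  (∀ x y : Fˣ, (x : F) + (y : F) = 1 → s x y = 0)

section aux

variable {F A : Type*} [Field F] [AddCommGroup A] {s : Fˣ → Fˣ → A}

lemma symbol_one_right (hs : IsAddSymbol s) (x : Fˣ) : s x 1 = 0 := by
  have := hs.2.1 x 1 1
  simp at this
  exact this

lemma symbol_one_left (hs : IsAddSymbol s) (y : Fˣ) : s 1 y = 0 := by
  have := hs.1 1 1 y
  simp at this
  exact this

lemma symbol_inv_right (hs : IsAddSymbol s) (x y : Fˣ) : s x y⁻¹ = - s x y := by
  have h : s x y + s x y⁻¹ = 0 := by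
    rw [← hs.2.1 x y y⁻¹]; simp [symbol_one_right hs]
  calc s x y⁻¹ = (s x y + s x y⁻¹) - s x y := by abel
    _ = - s x y := by rw [h]; abel

lemma symbol_inv_left (hs : IsAddSymbol s) (x y : Fˣ) : s x⁻¹ y = - s x y := by
  have h : s x y + s x⁻¹ y = 0 := by
    rw [← hs.1 x x⁻¹ y]; simp [symbol_one_left hs]
  calc s x⁻¹ y = (s x y + s x⁻¹ y) - s x y := by abel
    _ = - s x y := by rw [h]; abel

lemma symbol_neg_self (hs : IsAddSymbol s) (x : Fˣ) : s x (-x) = 0 := by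
  by_cases hx1 : (x : F) = 1
  · have hx : x = 1 := Units.ext hx1
    subst hx
    exact symbol_one_left hs _
  · have hx0 : (x : F) ≠ 0 := Units.ne_zero x
    have h1 : (1 : F) - (x : F) ≠ 0 := fun h => hx1 (by linear_combination -h)
    have h2 : (1 : F) - (x : F)⁻¹ ≠ 0 := by
      intro h
      have hx' : (x : F)⁻¹ = 1 := by linear_combination -h
      exact hx1 (by field_simp at hx'; exact hx'.symm)
    set u : Fˣ := Units.mk0 _ h1 with hu
    set v : Fˣ := Units.mk0 _ h2 with hv
    have hsu : s x u = 0 := hs.2.2 x u (by simp [hu])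
    have hsv : s x⁻¹ v = 0 := hs.2.2 x⁻¹ v (by simp [hv])
    have hsv' : s x v = 0 := by
      have h := symbol_inv_left hs x v
      rw [hsv] at h
      calc s x v = -(- s x v) := by abel
        _ = 0 := by rw [← h]; simp
    have huv : -x = u * v⁻¹ := by
      apply Units.ext
      have h3 : (-1 : F) + (x : F) ≠ 0 := fun h => hx1 (by linear_combination h)
      push_cast [hu, hv, Units.val_mk0]
      have h4 : (x : F) - 1 ≠ 0 := fun h => h3 (by linear_combination h)
      field_simp [h3]
      ring
    rw [huv, hs.2.1, hsu, symbol_inv_right hs, hsv']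
    abel

end aux

/-- For any symbol `s`, one has `s(x, y) + s(y, x) = 0`. -/
theorem symbol_skew {F A : Type*} [Field F] [AddCommGroup A]
    (s : Fˣ → Fˣ → A) (hs : IsAddSymbol s) (x y : Fˣ) : s x y + s y x = 0 := by
  have key := symbol_neg_self hs (x * y)
  have e1 : s x (-(x * y)) = s x (-x) + s x y := by rw [neg_mul_eq_neg_mul, hs.2.1]
  have e2 : s y (-(x * y)) = s y x + s y (-y) := by rw [neg_mul_eq_mul_neg, hs.2.1]
  rw [hs.1, e1, e2, symbol_neg_self hs x, symbol_neg_self hs y] at key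
  calc s x y + s y x = (0 + s x y) + (s y x + 0) := by abel
    _ = 0 := key
end

section
/- Let F be a finite field, A a commutative group (written additively), and s an A-valued symbol on F. Then 2 · s(x, y) = 0 for all x, y ∈ Fˣ. -/
section Aux

variable {F A : Type*} [Field F] [AddCommGroup A] {s : Fˣ → Fˣ → A} (hs : IsAddSymbol s)
include hs

lemma sym_one_left (y : Fˣ) : s 1 y = 0 := by
  have := hs.1 1 1 y
  simpa using this.symm

lemma sym_one_right (x : Fˣ) : s x 1 = 0 := by
  have := hs.2.1 x 1 1
  simpa using this.symm

lemma sym_inv_left (x y : Fˣ) : s x⁻¹ y = - s x y := by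
  have h := hs.1 x x⁻¹ y
  rw [mul_inv_cancel, sym_one_left hs] at h
  exact eq_neg_of_add_eq_zero_right h.symm

lemma sym_inv_right (x y : Fˣ) : s x y⁻¹ = - s x y := by
  have h := hs.2.1 x y y⁻¹
  rw [mul_inv_cancel, sym_one_right hs] at h
  exact eq_neg_of_add_eq_zero_right h.symm

lemma sym_pow_left (n : ℕ) (x y : Fˣ) : s (x ^ n) y = n • s x y := by
  induction n with
  | zero => simpa using sym_one_left hs y
  | succ k ih => rw [pow_succ, hs.1, ih, succ_nsmul]

lemma sym_pow_right (n : ℕ) (x y : Fˣ) : s x (y ^ n) = n • s x y := by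
  induction n with
  | zero => simpa using sym_one_right hs x
  | succ k ih => rw [pow_succ, hs.2.1, ih, succ_nsmul]

lemma sym_zpow_left (n : ℤ) (x y : Fˣ) : s (x ^ n) y = n • s x y := by
  cases n with
  | ofNat k => simpa using sym_pow_left hs k x y
  | negSucc k =>
      rw [zpow_negSucc, sym_inv_left hs, sym_pow_left hs]
      simp only [Int.negSucc_eq, add_smul, neg_smul, one_smul, natCast_zsmul, succ_nsmul]

lemma sym_zpow_right (n : ℤ) (x y : Fˣ) : s x (y ^ n) = n • s x y := by
  cases n with
  | ofNat k => simpa using sym_pow_right hs k x y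
  | negSucc k =>
      rw [zpow_negSucc, sym_inv_right hs, sym_pow_right hs]
      simp only [Int.negSucc_eq, add_smul, neg_smul, one_smul, natCast_zsmul, succ_nsmul]

lemma sym_neg_self (x : Fˣ) : s x (-x) = 0 := by
  by_cases hx : x = 1
  · subst hx; exact sym_one_left hs (-1)
  · have h1 : (x : F) ≠ 1 := fun h => hx (Units.ext h)
    have hx0 : (x : F) ≠ 0 := x.ne_zero
    have ha : (1 : F) - x ≠ 0 := sub_ne_zero.mpr (Ne.symm h1)
    have hb : (1 : F) - (x : F)⁻¹ ≠ 0 :=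
      sub_ne_zero.mpr (Ne.symm (by rw [Ne, inv_eq_one]; exact h1))
    set a : Fˣ := Units.mk0 _ ha with ha'
    set b : Fˣ := Units.mk0 _ hb with hb'
    have key : -x = a * b⁻¹ := by
      rw [Units.ext_iff]
      rw [Units.val_mul, Units.val_inv_eq_inv_val, ha', hb', Units.val_mk0, Units.val_mk0,
        Units.val_neg]
      rw [← div_eq_mul_inv, eq_div_iff hb]
      field_simp
      ring
    have hsa : s x a = 0 := hs.2.2 x a (by rw [ha', Units.val_mk0]; ring)
    have hsb : s x b = 0 := by
      have h2 : s x⁻¹ b = 0 := by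
        refine hs.2.2 x⁻¹ b ?_
        rw [hb', Units.val_mk0]
        have : ((x⁻¹ : Fˣ) : F) = (x : F)⁻¹ := Units.val_inv_eq_inv_val x
        rw [this]; ring
      have h3 := sym_inv_left hs x b
      rw [h2] at h3
      simpa using h3.symm
    rw [key, hs.2.1, hsa, sym_inv_right hs, hsb]
    simp

lemma sym_antisymm (x y : Fˣ) : s x y + s y x = 0 := by
  have h := sym_neg_self hs (x * y)
  have h1 : s x (-(x * y)) = s x y := by
    rw [show -(x * y) = (-x) * y from (neg_mul x y).symm, hs.2.1, sym_neg_self hs, zero_add]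
  have h2 : s y (-(x * y)) = s y x := by
    rw [show -(x * y) = x * (-y) from (mul_neg x y).symm, hs.2.1, sym_neg_self hs, add_zero]
  rw [hs.1, h1, h2] at h
  exact h

end Aux

/-- Any symbol on a finite field is killed by 2. -/
theorem symbol_two_torsion_of_finite {F A : Type*} [Field F] [Finite F] [AddCommGroup A]
    (s : Fˣ → Fˣ → A) (hs : IsAddSymbol s) (x y : Fˣ) : 2 • s x y = 0 := by
  obtain ⟨g, hg⟩ := IsCyclic.exists_generator (α := Fˣ)
  obtain ⟨i, hi⟩ := hg x
  obtain ⟨j, hj⟩ := hg y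
  have h2 : 2 • s g g = 0 := by
    have := sym_antisymm hs g g
    rw [two_smul]; exact this
  rw [← hi, ← hj, sym_zpow_left hs, sym_zpow_right hs, smul_comm (2 : ℕ) i,
    smul_comm (2 : ℕ) j, h2, smul_zero, smul_zero]
end

section
/- Let F be a finite field, A a commutative group (written additively), and s an A-valued symbol on F. Then s is trivial, i.e. s(x, y) = 0 for all x, y ∈ Fˣ. (Equivalently, K₂ of a finite field vanishes.) -/
open Polynomial in
private lemma symbol_zpow_left' {F A : Type*} [Field F] [AddCommGroup A] (s : Fˣ → Fˣ → A)
    (h : ∀ x x' y : Fˣ, s (x * x') y = s x y + s x' y) (x y : Fˣ) (m : ℤ) :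
    s (x ^ m) y = m • s x y := by
  let f : Fˣ →* Multiplicative A :=
    MonoidHom.mk' (fun u => Multiplicative.ofAdd (s u y)) (fun a b => by
      simpa using congrArg Multiplicative.ofAdd (h a b y))
  have := map_zpow f x m
  simpa [f, ← ofAdd_zsmul] using this

/-- (Steinberg) Any symbol on a finite field is trivial; equivalently, `K₂` of a
finite field vanishes. -/
theorem symbol_trivial_of_finite {F A : Type*} [Field F] [Finite F] [AddCommGroup A]
    (s : Fˣ → Fˣ → A) (hs : IsAddSymbol s) (x y : Fˣ) : s x y = 0 := by
  classical
  haveI : Fintype F := Fintype.ofFinite F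
  obtain ⟨h1, h2, h3⟩ := hs
  -- basic consequences of bilinearity
  have hone : ∀ y : Fˣ, s 1 y = 0 := by
    intro y
    have := h1 1 1 y
    rw [one_mul] at this
    exact left_eq_add.mp this
  have hinvl : ∀ u v : Fˣ, s u⁻¹ v = -s u v := by
    intro u v
    have h' := h1 u u⁻¹ v
    rw [mul_inv_cancel, hone] at h'
    have h'' : s u⁻¹ v + s u v = 0 := by rw [add_comm]; exact h'.symm
    exact eq_neg_of_add_eq_zero_left h''
  have hinvr : ∀ u v : Fˣ, s u v⁻¹ = -s u v := by
    intro u v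
    have h' := h2 u v v⁻¹
    rw [mul_inv_cancel] at h'
    have h0 : s u 1 = 0 := by
      have := h2 u 1 1
      rw [one_mul] at this
      exact left_eq_add.mp this
    rw [h0] at h'
    have h'' : s u v⁻¹ + s u v = 0 := by rw [add_comm]; exact h'.symm
    exact eq_neg_of_add_eq_zero_left h''
  -- Steinberg: s x (-x) = 0
  have hneg : ∀ u : Fˣ, s u (-u) = 0 := by
    intro u
    by_cases hu1 : u = 1
    · subst hu1
      exact hone (-1)
    · have hx1 : (u : F) ≠ 1 := fun h => hu1 (Units.ext h)
      have hu0 : (u : F) ≠ 0 := Units.ne_zero u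
      have hne : (1 : F) - (u : F) ≠ 0 := sub_ne_zero.mpr (Ne.symm hx1)
      have hne' : (1 : F) - (u : F)⁻¹ ≠ 0 := by
        intro h
        have h' : ((u : F))⁻¹ = 1 := ((sub_eq_zero.mp h).symm)
        exact hx1 (inv_eq_one.mp h')
      set a : Fˣ := Units.mk0 _ hne with ha
      set b : Fˣ := Units.mk0 _ hne' with hb
      have key : a = (-u) * b := by
        apply Units.ext
        rw [ha, hb]
        push_cast [Units.val_mk0]
        field_simp
        ring
      have key2 : -u = a * b⁻¹ := by rw [key, mul_inv_cancel_right]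
      have h4 : s u a = 0 := h3 u a (by rw [ha]; simp)
      have h5 : s u b = 0 := by
        have h6 : s u⁻¹ b = 0 := by
          apply h3
          rw [hb]
          simp
        have h7 := hinvl u b
        rw [h6] at h7
        exact (neg_eq_zero.mp h7.symm)
      rw [key2, h2, hinvr, h4, h5]
      simp
  -- antisymmetry
  have hanti : ∀ u v : Fˣ, s u v + s v u = 0 := by
    intro u v
    have h0 : s (u * v) (-(u * v)) = 0 := hneg (u * v)
    have e1 : s u (-(u * v)) = s u (-u) + s u v := by
      rw [show -(u * v) = -u * v by rw [neg_mul], h2]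
    have e2 : s v (-(u * v)) = s v u + s v (-v) := by
      rw [show -(u * v) = u * -v by rw [mul_neg], h2]
    rw [h1, e1, e2, hneg, hneg] at h0
    rw [zero_add, add_zero] at h0
    exact h0
  -- cyclicity
  obtain ⟨g, hg⟩ := IsCyclic.exists_generator (α := Fˣ)
  set c := s g g with hc
  have two : c + c = 0 := hanti g g
  have h2c : (2 : ℤ) • c = 0 := by rw [two_zsmul]; exact two
  have hodd : ∀ z : ℤ, Odd z → z • c = c := by
    rintro z ⟨t, ht⟩
    have ht' : z = t * 2 + 1 := by omega
    rw [ht', add_smul, one_smul, mul_smul, h2c, smul_zero, zero_add]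
  have hpow : ∀ m k : ℤ, s (g ^ m) (g ^ k) = (m * k) • c := by
    intro m k
    rw [symbol_zpow_left' s h1]
    have : s g (g ^ k) = k • c := by
      have := symbol_zpow_left' (fun a b => s b a) (fun x x' y => h2 y x x') g g k
      simpa using this
    rw [this, smul_smul]
  -- it suffices that c = 0
  suffices hc0 : c = 0 by
    obtain ⟨m, hm⟩ := Subgroup.mem_zpowers_iff.mp (hg x)
    obtain ⟨k, hk⟩ := Subgroup.mem_zpowers_iff.mp (hg y)
    rw [← hm, ← hk, hpow, hc0, smul_zero]
  have hord : (orderOf g : ℤ) • c = 0 := by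
    have h' := hpow (orderOf g) 1
    rw [zpow_one, mul_one] at h'
    rw [← h']
    have hgo : (g : Fˣ) ^ ((orderOf g : ℕ) : ℤ) = 1 := by
      rw [zpow_natCast, pow_orderOf_eq_one]
    rw [hgo]
    exact hone g
  rcases Nat.even_or_odd (orderOf g) with hev | hod
  · -- even order case
    have hcard : orderOf g = Nat.card Fˣ := orderOf_eq_card_of_forall_mem_zpowers hg
    have hFodd : Fintype.card F % 2 = 1 := by
      apply Nat.odd_iff.mp
      rw [← Nat.card_eq_fintype_card, Nat.card_eq_card_units_add_one, ← hcard]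
      exact hev.add_one
    -- g is not a square
    have hgns : ¬ IsSquare g := by
      rintro ⟨r, hr⟩
      obtain ⟨j, hj⟩ := Subgroup.mem_zpowers_iff.mp (hg r)
      have hgeq : g ^ ((2 * j - 1) : ℤ) = 1 := by
        have h2j : g ^ (2 * j : ℤ) = g := by
          rw [two_mul, zpow_add, hj]
          exact hr.symm
        rw [sub_eq_add_neg, zpow_add, h2j, zpow_neg, zpow_one, mul_inv_cancel]
      have hdvd : (orderOf g : ℤ) ∣ (2 * j - 1) := orderOf_dvd_iff_zpow_eq_one.mpr hgeq
      obtain ⟨t, ht⟩ := hev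
      have ht' : (orderOf g : ℤ) = t + t := by exact_mod_cast ht
      obtain ⟨k, hk⟩ := hdvd
      rw [ht'] at hk
      have he0 : Even (t + t : ℤ) := ⟨t, rfl⟩
      have heven : Even ((t + t : ℤ) * k) := he0.mul_right k
      rw [← hk] at heven
      obtain ⟨w, hw⟩ := heven
      omega
    -- find a, b with a^2 + b^2 = g
    obtain ⟨a0, b0, hab⟩ := FiniteField.exists_root_sum_quadratic
      (f := (Polynomial.X : Polynomial F) ^ 2)
      (g := (Polynomial.X : Polynomial F) ^ 2 - Polynomial.C (g : F))
      (Polynomial.degree_X_pow 2)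
      (Polynomial.degree_X_pow_sub_C (by norm_num) _) hFodd
    have hab' : a0 ^ 2 + b0 ^ 2 = (g : F) := by
      have := hab
      simp only [Polynomial.eval_add, Polynomial.eval_sub, Polynomial.eval_pow,
        Polynomial.eval_X, Polynomial.eval_C] at this
      linear_combination this
    have ha0 : a0 ≠ 0 := by
      intro h
      apply hgns
      have hb0 : b0 ≠ 0 := by
        intro hb
        apply Units.ne_zero g
        rw [h, hb] at hab'
        rw [← hab']
        norm_num
      refine ⟨Units.mk0 b0 hb0, Units.ext ?_⟩
      simp only [Units.val_mul, Units.val_mk0]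
      rw [h] at hab'
      rw [← hab']
      ring
    have hb0 : b0 ≠ 0 := by
      intro h
      apply hgns
      refine ⟨Units.mk0 a0 ha0, Units.ext ?_⟩
      simp only [Units.val_mul, Units.val_mk0]
      rw [h] at hab'
      rw [← hab']
      ring
    set ua : Fˣ := Units.mk0 a0 ha0 with hua
    set ub : Fˣ := Units.mk0 b0 hb0 with hub
    obtain ⟨p, hp⟩ := Subgroup.mem_zpowers_iff.mp (hg ua)
    obtain ⟨r, hr⟩ := Subgroup.mem_zpowers_iff.mp (hg ub)
    have hU : g ^ (2 * p - 1 : ℤ) = ua ^ 2 * g⁻¹ := by rw [← hp]; group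
    have hV : g ^ (2 * r - 1 : ℤ) = ub ^ 2 * g⁻¹ := by rw [← hr]; group
    have hsum : ((g ^ (2 * p - 1 : ℤ) : Fˣ) : F) + ((g ^ (2 * r - 1 : ℤ) : Fˣ) : F) = 1 := by
      rw [hU, hV]
      push_cast [hua, hub, Units.val_mk0]
      have hgF : (g : F) ≠ 0 := Units.ne_zero g
      field_simp
      linear_combination hab'
    have h0 : s (g ^ (2 * p - 1 : ℤ)) (g ^ (2 * r - 1 : ℤ)) = 0 := h3 _ _ hsum
    rw [hpow] at h0
    have ho1 : Odd (2 * p - 1 : ℤ) := ⟨p - 1, by ring⟩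
    have ho2 : Odd (2 * r - 1 : ℤ) := ⟨r - 1, by ring⟩
    have hom : Odd ((2 * p - 1) * (2 * r - 1) : ℤ) := ho1.mul ho2
    rwa [hodd _ hom] at h0
  · -- odd order case
    have hoz : Odd ((orderOf g : ℕ) : ℤ) := by exact_mod_cast hod
    rw [← hodd _ hoz]
    exact hord
end

section
/- Let p be an odd prime and let v : ℚ_pˣ → ℤ denote the p-adic valuation. For all x, y ∈ ℚ_pˣ, the element t(x, y) = (-1)^{v(x)v(y)} · x^{v(y)} · y^{-v(x)} has valuation 0, hence lies in ℤ_pˣ; and the map s_p : ℚ_pˣ × ℚ_pˣ → (ℤ/pℤ)ˣ sending (x, y) to the residue of t(x, y) modulo p is a symbol on ℚ_p with values in the multiplicative group (ℤ/pℤ)ˣ: it is multiplicative in each variable and s_p(x, y) = 1 whenever x + y = 1. -/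
/-- An `A`-valued (multiplicative) symbol on the field `F`: a map on `Fˣ × Fˣ`,
multiplicative in each variable, equal to `1` on pairs `(x, y)` with `x + y = 1`. -/
def IsMulSymbol {F A : Type*} [Field F] [CommGroup A] (s : Fˣ → Fˣ → A) : Prop :=
  (∀ x x' y : Fˣ, s (x * x') y = s x y * s x' y) ∧
  (∀ x y y' : Fˣ, s x (y * y') = s x y * s x y') ∧
  (∀ x y : Fˣ, (x : F) + (y : F) = 1 → s x y = 1)

/-- The element `(-1)^(v(x)v(y)) · x^(v(y)) · y^(-v(x))` of `ℚ_pˣ`, where `v` is the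
p-adic valuation. -/
noncomputable def padicTame (p : ℕ) [Fact p.Prime] (x y : ℚ_[p]ˣ) : ℚ_[p]ˣ :=
  (-1) ^ ((x : ℚ_[p]).valuation * (y : ℚ_[p]).valuation) *
    x ^ (y : ℚ_[p]).valuation * y ^ (-(x : ℚ_[p]).valuation)

section Aux

variable {p : ℕ} [Fact p.Prime]

lemma padic_valuation_inv {x : ℚ_[p]} (hx : x ≠ 0) : (x⁻¹).valuation = -x.valuation := by
  have h := Padic.valuation_mul (p := p) (inv_ne_zero hx) hx
  rw [inv_mul_cancel₀ hx, Padic.valuation_one] at h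
  linarith

lemma padic_valuation_zpow {x : ℚ_[p]} (hx : x ≠ 0) (n : ℤ) :
    (x ^ n).valuation = n * x.valuation := by
  induction n using Int.induction_on with
  | zero => simp
  | succ n ih =>
      rw [zpow_add_one₀ hx, Padic.valuation_mul (zpow_ne_zero _ hx) hx, ih]; ring
  | pred n ih =>
      rw [zpow_sub_one₀ hx, Padic.valuation_mul (zpow_ne_zero _ hx) (inv_ne_zero hx),
        padic_valuation_inv hx, ih]; ring

lemma padic_valuation_neg_one : ((-1 : ℚ_[p])).valuation = 0 := by
  have : ((-1 : ℤ) : ℚ_[p]) = -1 := by push_cast; ring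
  rw [← this, Padic.valuation_intCast]
  simp [padicValInt]

lemma padic_val_eq_zero_of_norm_one {x : ℚ_[p]} (hx : x ≠ 0) (h : ‖x‖ = 1) :
    x.valuation = 0 := by
  have h1 := Padic.norm_eq_zpow_neg_valuation hx
  rw [h] at h1
  have hp0 : (0:ℝ) < p := by exact_mod_cast (Fact.out : p.Prime).pos
  have hp1 : (p:ℝ) ≠ 1 := by exact_mod_cast (Fact.out : p.Prime).ne_one
  have := zpow_right_injective₀ hp0 hp1 (by rw [← h1, zpow_zero] : (p:ℝ)^(-x.valuation) = (p:ℝ)^(0:ℤ))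
  linarith [neg_eq_zero.mp this]

lemma padic_val_eq_of_norm_eq {x y : ℚ_[p]} (hx : x ≠ 0) (hy : y ≠ 0) (h : ‖x‖ = ‖y‖) :
    x.valuation = y.valuation := by
  rw [Padic.norm_eq_zpow_neg_valuation hx, Padic.norm_eq_zpow_neg_valuation hy] at h
  have hp0 : (0:ℝ) < p := by exact_mod_cast (Fact.out : p.Prime).pos
  have hp1 : (p:ℝ) ≠ 1 := by exact_mod_cast (Fact.out : p.Prime).ne_one
  have := zpow_right_injective₀ hp0 hp1 h
  linarith [neg_injective this]

lemma padicTame_valuation (x y : ℚ_[p]ˣ) :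
    ((padicTame p x y : ℚ_[p]ˣ) : ℚ_[p]).valuation = 0 := by
  have nx : (x : ℚ_[p]) ≠ 0 := x.ne_zero
  have ny : (y : ℚ_[p]) ≠ 0 := y.ne_zero
  have n1 : ((-1 : ℚ_[p]ˣ) : ℚ_[p]) = -1 := by simp
  unfold padicTame
  rw [Units.val_mul, Units.val_mul, Units.val_zpow_eq_zpow_val, Units.val_zpow_eq_zpow_val,
    Units.val_zpow_eq_zpow_val, n1,
    Padic.valuation_mul (mul_ne_zero (zpow_ne_zero _ (by norm_num)) (zpow_ne_zero _ nx))
      (zpow_ne_zero _ ny),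
    Padic.valuation_mul (zpow_ne_zero _ (by norm_num)) (zpow_ne_zero _ nx),
    padic_valuation_zpow (by norm_num : (-1 : ℚ_[p]) ≠ 0),
    padic_valuation_zpow nx, padic_valuation_zpow ny, padic_valuation_neg_one]
  ring

lemma padicTame_norm (x y : ℚ_[p]ˣ) :
    ‖((padicTame p x y : ℚ_[p]ˣ) : ℚ_[p])‖ = 1 := by
  rw [Padic.norm_eq_zpow_neg_valuation (padicTame p x y).ne_zero, padicTame_valuation, neg_zero, zpow_zero]

lemma padicTame_mul_left (x x' y : ℚ_[p]ˣ) :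
    padicTame p (x * x') y = padicTame p x y * padicTame p x' y := by
  have h : ((x * x' : ℚ_[p]ˣ) : ℚ_[p]).valuation =
      (x : ℚ_[p]).valuation + (x' : ℚ_[p]).valuation := by
    rw [Units.val_mul, Padic.valuation_mul x.ne_zero x'.ne_zero]
  unfold padicTame
  rw [h, add_mul, zpow_add, mul_zpow, neg_add, zpow_add]
  generalize (-1 : ℚ_[p]ˣ) ^ ((x : ℚ_[p]).valuation * (y : ℚ_[p]).valuation) = A
  generalize (-1 : ℚ_[p]ˣ) ^ ((x' : ℚ_[p]).valuation * (y : ℚ_[p]).valuation) = B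
  generalize x ^ (y : ℚ_[p]).valuation = C
  generalize x' ^ (y : ℚ_[p]).valuation = D
  generalize y ^ (-(x : ℚ_[p]).valuation) = E
  generalize y ^ (-(x' : ℚ_[p]).valuation) = F
  simp only [mul_assoc, mul_comm, mul_left_comm]

lemma padicTame_mul_right (x y y' : ℚ_[p]ˣ) :
    padicTame p x (y * y') = padicTame p x y * padicTame p x y' := by
  have h : ((y * y' : ℚ_[p]ˣ) : ℚ_[p]).valuation =
      (y : ℚ_[p]).valuation + (y' : ℚ_[p]).valuation := by
    rw [Units.val_mul, Padic.valuation_mul y.ne_zero y'.ne_zero]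
  unfold padicTame
  rw [h, mul_add, zpow_add, zpow_add, mul_zpow]
  generalize (-1 : ℚ_[p]ˣ) ^ ((x : ℚ_[p]).valuation * (y : ℚ_[p]).valuation) = A
  generalize (-1 : ℚ_[p]ˣ) ^ ((x : ℚ_[p]).valuation * (y' : ℚ_[p]).valuation) = B
  generalize x ^ (y : ℚ_[p]).valuation = C
  generalize x ^ (y' : ℚ_[p]).valuation = D
  generalize y ^ (-(x : ℚ_[p]).valuation) = E
  generalize y' ^ (-(x : ℚ_[p]).valuation) = F
  simp only [mul_assoc, mul_comm, mul_left_comm]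

/-- The subgroup of `ℚ_[p]ˣ` of units congruent to 1 mod the maximal ideal. -/
def oneUnits (p : ℕ) [Fact p.Prime] : Subgroup ℚ_[p]ˣ where
  carrier := {z | ‖(z : ℚ_[p]) - 1‖ < 1}
  one_mem' := by simp
  mul_mem' := by
    intro a b ha hb
    simp only [Set.mem_setOf_eq] at *
    have hb1 : ‖(b : ℚ_[p])‖ = 1 := by
      have he : (b : ℚ_[p]) = ((b : ℚ_[p]) - 1) + 1 := by ring
      rw [he, Padic.add_eq_max_of_ne (by rw [norm_one]; exact ne_of_lt hb), norm_one,
        max_eq_right (le_of_lt hb)]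
    have he : ((a * b : ℚ_[p]ˣ) : ℚ_[p]) - 1 = ((a : ℚ_[p]) - 1) * b + ((b : ℚ_[p]) - 1) := by
      rw [Units.val_mul]; ring
    rw [he]
    calc ‖((a : ℚ_[p]) - 1) * b + ((b : ℚ_[p]) - 1)‖
        ≤ max ‖((a : ℚ_[p]) - 1) * b‖ ‖(b : ℚ_[p]) - 1‖ := Padic.nonarchimedean _ _
      _ < 1 := by
          apply max_lt _ hb
          rw [norm_mul, hb1, mul_one]; exact ha
  inv_mem' := by
    intro a ha
    simp only [Set.mem_setOf_eq] at *
    have ha1 : ‖(a : ℚ_[p])‖ = 1 := by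
      have he : (a : ℚ_[p]) = ((a : ℚ_[p]) - 1) + 1 := by ring
      rw [he, Padic.add_eq_max_of_ne (by rw [norm_one]; exact ne_of_lt ha), norm_one,
        max_eq_right (le_of_lt ha)]
    have he : ((a⁻¹ : ℚ_[p]ˣ) : ℚ_[p]) - 1 = (a : ℚ_[p])⁻¹ * (1 - a) := by
      rw [Units.val_inv_eq_inv_val]
      field_simp
    rw [he, norm_mul, norm_inv, ha1, inv_one, one_mul, ← neg_sub, norm_neg]
    exact ha

lemma toZMod_eq_one_of_mem {z : ℚ_[p]ˣ} (hz : z ∈ oneUnits p)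
    (h : ‖(z : ℚ_[p])‖ ≤ 1) : PadicInt.toZMod (⟨(z : ℚ_[p]), h⟩ : ℤ_[p]) = 1 := by
  set zz : ℤ_[p] := (⟨(z : ℚ_[p]), h⟩ : ℤ_[p]) with hzz
  have hmem : zz - 1 ∈ RingHom.ker (PadicInt.toZMod (p := p)) := by
    rw [PadicInt.ker_toZMod, PadicInt.maximalIdeal_eq_span_p, Ideal.mem_span_singleton,
      ← PadicInt.norm_lt_one_iff_dvd]
    have hz' : ‖(z : ℚ_[p]) - 1‖ < 1 := hz
    rw [PadicInt.norm_def]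
    push_cast
    exact hz'
  rw [RingHom.mem_ker, map_sub, map_one, sub_eq_zero] at hmem
  exact hmem

lemma padicTame_mem_oneUnits_of_steinberg (x y : ℚ_[p]ˣ)
    (hxy : (x : ℚ_[p]) + (y : ℚ_[p]) = 1) : padicTame p x y ∈ oneUnits p := by
  set a := (x : ℚ_[p]).valuation with ha
  set b := (y : ℚ_[p]).valuation with hb
  have nx : (x : ℚ_[p]) ≠ 0 := x.ne_zero
  have ny : (y : ℚ_[p]) ≠ 0 := y.ne_zero
  have hp0 : (0:ℝ) < p := by exact_mod_cast (Fact.out : p.Prime).pos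
  have hp1 : (1:ℝ) < p := by exact_mod_cast (Fact.out : p.Prime).one_lt
  have hnx : ‖(x : ℚ_[p])‖ = (p:ℝ) ^ (-a) := Padic.norm_eq_zpow_neg_valuation nx
  have hny : ‖(y : ℚ_[p])‖ = (p:ℝ) ^ (-b) := Padic.norm_eq_zpow_neg_valuation ny
  rcases lt_trichotomy a 0 with hA | hA | hA
  · -- a < 0, then b = a and t = (-(x*y⁻¹))^a
    have hxgt : 1 < ‖(x : ℚ_[p])‖ := by
      rw [hnx]; exact one_lt_zpow₀ hp1 (by omega)
    have hyx : ‖(y : ℚ_[p])‖ = ‖(x : ℚ_[p])‖ := by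
      have he : (y : ℚ_[p]) = 1 + (-(x : ℚ_[p])) := by linear_combination hxy
      rw [he, Padic.add_eq_max_of_ne (by rw [norm_one, norm_neg]; exact ne_of_lt hxgt),
        norm_one, norm_neg, max_eq_right (le_of_lt hxgt)]
    have hba : b = a := padic_val_eq_of_norm_eq ny nx hyx
    have hmem : -(x * y⁻¹) ∈ oneUnits p := by
      show ‖((-(x * y⁻¹) : ℚ_[p]ˣ) : ℚ_[p]) - 1‖ < 1
      have he : ((-(x * y⁻¹) : ℚ_[p]ˣ) : ℚ_[p]) - 1 = -((y : ℚ_[p])⁻¹) := by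
        rw [Units.val_neg, Units.val_mul, Units.val_inv_eq_inv_val]
        field_simp
        linear_combination -hxy
      rw [he, norm_neg, norm_inv, hyx]
      exact inv_lt_one_of_one_lt₀ hxgt
    have heq : padicTame p x y = (-(x * y⁻¹)) ^ a := by
      unfold padicTame
      rw [← ha, ← hb, hba]
      have h1 : (-(x * y⁻¹)) ^ a = (-1 : ℚ_[p]ˣ) ^ a * x ^ a * y ^ (-a) := by
        rw [neg_eq_neg_one_mul, mul_zpow, mul_zpow, zpow_neg, inv_zpow, mul_assoc, ← zpow_neg]
      rw [h1]
      congr 2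
      have hev : Even (a * a - a) := by
        have h2 := Int.even_mul_succ_self (a - 1)
        convert h2 using 1
        ring
      have h3 : a * a = a + (a * a - a) := by ring
      rw [h3, zpow_add, Even.neg_one_zpow hev, mul_one]
    rw [heq]
    exact Subgroup.zpow_mem _ hmem a
  · -- a = 0
    rcases lt_trichotomy b 0 with hB | hB | hB
    · -- impossible
      exfalso
      have hygt : 1 < ‖(y : ℚ_[p])‖ := by
        rw [hny]; exact one_lt_zpow₀ hp1 (by omega)
      have hxy' : ‖(x : ℚ_[p])‖ = ‖(y : ℚ_[p])‖ := by
        have he : (x : ℚ_[p]) = 1 + (-(y : ℚ_[p])) := by linear_combination hxy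
        rw [he, Padic.add_eq_max_of_ne (by rw [norm_one, norm_neg]; exact ne_of_lt hygt),
          norm_one, norm_neg, max_eq_right (le_of_lt hygt)]
      rw [hnx, hA] at hxy'
      simp only [neg_zero, zpow_zero] at hxy'
      linarith
    · -- a = 0, b = 0 : t = 1
      have heq : padicTame p x y = 1 := by
        unfold padicTame
        rw [← ha, ← hb, hA, hB]
        norm_num
      rw [heq]; exact (oneUnits p).one_mem
    · -- b > 0 : then x ∈ oneUnits, t = x^b
      have hylt : ‖(y : ℚ_[p])‖ < 1 := by
        rw [hny]; exact zpow_lt_one_of_neg₀ hp1 (by omega)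
      have hxmem : x ∈ oneUnits p := by
        show ‖(x : ℚ_[p]) - 1‖ < 1
        have he : (x : ℚ_[p]) - 1 = -(y : ℚ_[p]) := by linear_combination hxy
        rw [he, norm_neg]; exact hylt
      have heq : padicTame p x y = x ^ b := by
        unfold padicTame
        rw [← ha, ← hb, hA]
        norm_num
      rw [heq]
      exact Subgroup.zpow_mem _ hxmem b
  · -- a > 0 : then b = 0, y ∈ oneUnits, t = y^(-a)
    have hxlt : ‖(x : ℚ_[p])‖ < 1 := by
      rw [hnx]; exact zpow_lt_one_of_neg₀ hp1 (by omega)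
    have hymem : y ∈ oneUnits p := by
      show ‖(y : ℚ_[p]) - 1‖ < 1
      have he : (y : ℚ_[p]) - 1 = -(x : ℚ_[p]) := by linear_combination hxy
      rw [he, norm_neg]; exact hxlt
    have hy1 : ‖(y : ℚ_[p])‖ = 1 := by
      have he : (y : ℚ_[p]) = ((y : ℚ_[p]) - 1) + 1 := by ring
      rw [he, Padic.add_eq_max_of_ne (by rw [norm_one]; exact ne_of_lt hymem), norm_one,
        max_eq_right (le_of_lt hymem)]
    have hB : b = 0 := padic_val_eq_zero_of_norm_one ny hy1
    have heq : padicTame p x y = y ^ (-a) := by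
      unfold padicTame
      rw [← ha, ← hb, hB]
      norm_num
    rw [heq]
    exact Subgroup.zpow_mem _ hymem (-a)

end Aux

/-- For an odd prime `p`, the element `t(x,y) = (-1)^(v(x)v(y)) x^(v(y)) y^(-v(x))` has
valuation `0` (hence lies in `ℤ_pˣ`), and its residue modulo `p` defines a symbol
`s_p` on `ℚ_p` with values in `(ℤ/pℤ)ˣ`. -/
theorem padic_tame_symbol (p : ℕ) [Fact p.Prime] (hp : p ≠ 2) :
    (∀ x y : ℚ_[p]ˣ,
      ((padicTame p x y : ℚ_[p]ˣ) : ℚ_[p]).valuation = 0 ∧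
      ‖((padicTame p x y : ℚ_[p]ˣ) : ℚ_[p])‖ = 1) ∧
    ∃ s : ℚ_[p]ˣ → ℚ_[p]ˣ → (ZMod p)ˣ,
      (∀ (x y : ℚ_[p]ˣ) (h : ‖((padicTame p x y : ℚ_[p]ˣ) : ℚ_[p])‖ ≤ 1),
        (s x y : ZMod p) =
          PadicInt.toZMod (⟨((padicTame p x y : ℚ_[p]ˣ) : ℚ_[p]), h⟩ : ℤ_[p])) ∧
      IsMulSymbol s := by
  have hval := fun x y : ℚ_[p]ˣ => padicTame_valuation x y
  have hnorm := fun x y : ℚ_[p]ˣ => padicTame_norm x y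
  refine ⟨fun x y => ⟨hval x y, hnorm x y⟩, ?_⟩
  -- the integral element of norm one
  set zt : ℚ_[p]ˣ → ℚ_[p]ˣ → ℤ_[p] := fun x y =>
    (⟨((padicTame p x y : ℚ_[p]ˣ) : ℚ_[p]), le_of_eq (hnorm x y)⟩ : ℤ_[p]) with hzt
  have hztnorm : ∀ x y, ‖zt x y‖ = 1 := fun x y => by
    show ‖((padicTame p x y : ℚ_[p]ˣ) : ℚ_[p])‖ = 1
    exact hnorm x y
  have hunit : ∀ x y, IsUnit (PadicInt.toZMod (zt x y)) := fun x y =>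
    (PadicInt.isUnit_iff.mpr (hztnorm x y)).map PadicInt.toZMod
  refine ⟨fun x y => (hunit x y).unit, fun x y h => ?_, ?_, ?_, ?_⟩
  · exact (hunit x y).unit_spec
  · intro x x' y
    ext
    show PadicInt.toZMod (zt (x * x') y) = PadicInt.toZMod (zt x y) * PadicInt.toZMod (zt x' y)
    rw [← map_mul]
    congr 1
    apply Subtype.ext
    show ((padicTame p (x * x') y : ℚ_[p]ˣ) : ℚ_[p]) = _
    rw [padicTame_mul_left]
    rfl
  · intro x y y'
    ext
    show PadicInt.toZMod (zt x (y * y')) = PadicInt.toZMod (zt x y) * PadicInt.toZMod (zt x y')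
    rw [← map_mul]
    congr 1
    apply Subtype.ext
    show ((padicTame p x (y * y') : ℚ_[p]ˣ) : ℚ_[p]) = _
    rw [padicTame_mul_right]
    rfl
  · intro x y hxy
    ext
    show PadicInt.toZMod (zt x y) = 1
    exact toZMod_eq_one_of_mem (padicTame_mem_oneUnits_of_steinberg x y hxy) _
end

section
/- Let v : ℚ_2ˣ → ℤ be the 2-adic valuation, and for x ∈ ℚ_2ˣ write x = 2^{v(x)} u_x with u_x ∈ ℤ_2ˣ. For a 2-adic unit u ∈ ℤ_2ˣ, let ε(u) ∈ ℤ/2ℤ be the reduction of (u - 1)/2 (which lies in ℤ_2) and ω(u) ∈ ℤ/2ℤ the reduction of (u² - 1)/8 (which lies in ℤ_2). Define s_2 : ℚ_2ˣ × ℚ_2ˣ → {1, -1} by s_2(x, y) = (-1)^{ε(u_x)ε(u_y) + v(x)ω(u_y) + v(y)ω(u_x)}. Then s_2 is a symbol on ℚ_2 with values in {1, -1}: it is multiplicative in each variable and s_2(x, y) = 1 whenever x + y = 1. -/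
section Aux

lemma zmod2_pow_val_add (e f : ZMod 2) :
    (-1 : ℤˣ) ^ (e + f).val = (-1 : ℤˣ) ^ e.val * (-1 : ℤˣ) ^ f.val := by
  revert e f; decide

lemma toZMod_two : (PadicInt.toZMod (2 : ℤ_[2])) = 0 := by
  rw [show (2:ℤ_[2]) = ((2:ℕ):ℤ_[2]) by norm_num, map_natCast]
  decide

lemma toZMod_eight : (PadicInt.toZMod (8 : ℤ_[2])) = 0 := by
  rw [show (8:ℤ_[2]) = ((8:ℕ):ℤ_[2]) by norm_num, map_natCast]
  decide

lemma norm_two : ‖(2:ℚ_[2])‖ = (2:ℝ)⁻¹ := by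
  have := @Padic.norm_p 2 _
  simpa using this

lemma unique_decomp {n m : ℤ} {a b : ℤ_[2]ˣ}
    (h : (2:ℚ_[2]) ^ n * ((a:ℤ_[2]):ℚ_[2]) = (2:ℚ_[2]) ^ m * ((b:ℤ_[2]):ℚ_[2])) :
    n = m ∧ a = b := by
  have hnm : n = m := by
    have h2 := congrArg norm h
    simp only [norm_mul, norm_zpow, norm_two, PadicInt.padic_norm_e_of_padicInt,
      PadicInt.norm_units, mul_one] at h2
    exact zpow_right_injective₀ (by norm_num) (by norm_num) h2
  subst hnm
  have h2n : (2:ℚ_[2]) ^ n ≠ 0 := zpow_ne_zero _ two_ne_zero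
  have := mul_left_cancel₀ h2n h
  exact ⟨rfl, Units.ext (Subtype.coe_injective this)⟩

variable (ε ω : ℤ_[2]ˣ → ZMod 2)
variable (hε : ∀ a : ℤ_[2]ˣ, ∃ b : ℤ_[2], (a : ℤ_[2]) = 1 + 2 * b ∧ ε a = PadicInt.toZMod b)
variable (hω : ∀ a : ℤ_[2]ˣ, ∃ c : ℤ_[2], (a : ℤ_[2]) ^ 2 = 1 + 8 * c ∧ ω a = PadicInt.toZMod c)

include hε in
lemma eps_add (a a' : ℤ_[2]ˣ) : ε (a * a') = ε a + ε a' := by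
  obtain ⟨b, hb, hb2⟩ := hε a
  obtain ⟨b', hb', hb2'⟩ := hε a'
  obtain ⟨b'', hb'', hb2''⟩ := hε (a * a')
  have key : b'' = b + b' + 2 * (b * b') := by
    apply mul_left_cancel₀ (two_ne_zero (α := ℤ_[2]))
    rw [Units.val_mul, hb, hb'] at hb''
    linear_combination -hb''
  rw [hb2'', hb2, hb2', key]
  rw [map_add, map_add, map_mul, toZMod_two, zero_mul, add_zero]

include hω in
lemma omega_add (a a' : ℤ_[2]ˣ) : ω (a * a') = ω a + ω a' := by
  obtain ⟨c, hc, hc2⟩ := hω a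
  obtain ⟨c', hc', hc2'⟩ := hω a'
  obtain ⟨c'', hc'', hc2''⟩ := hω (a * a')
  have key : c'' = c + c' + 8 * (c * c') := by
    apply mul_left_cancel₀ (show (8:ℤ_[2]) ≠ 0 by norm_num)
    rw [Units.val_mul, mul_pow, hc, hc'] at hc''
    linear_combination -hc''
  rw [hc2'', hc2, hc2', key]
  rw [map_add, map_add, map_mul, toZMod_eight, zero_mul, add_zero]

include hε hω in
lemma caseA (U W : ℤ_[2]ˣ) (n : ℕ)
    (hW : (W : ℤ_[2]) = 1 - 2 ^ (n+1) * (U : ℤ_[2])) :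
    ε U * ε W + ((n+1 : ℕ) : ZMod 2) * ω W = 0 := by
  obtain ⟨bU, hbU, hεU⟩ := hε U
  obtain ⟨bW, hbW, hεW⟩ := hε W
  obtain ⟨cW, hcW, hωW⟩ := hω W
  have h8 : (8:ℤ_[2]) ≠ 0 := by norm_num
  have hbW' : bW = -(2 ^ n * (U : ℤ_[2])) := by
    apply mul_left_cancel₀ (two_ne_zero (α := ℤ_[2]))
    rw [hW] at hbW
    linear_combination -hbW
  have htU : PadicInt.toZMod (U : ℤ_[2]) = 1 := by
    rw [hbU, map_add, map_mul, toZMod_two, zero_mul, add_zero, map_one]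
  cases n with
  | zero =>
    have hcW' : cW = (U : ℤ_[2]) * bU := by
      apply mul_left_cancel₀ h8
      rw [hW] at hcW
      linear_combination -hcW + 4 * (U:ℤ_[2]) * hbU
    have hεW' : ε W = 1 := by
      rw [hεW, hbW', map_neg, map_mul, map_pow, htU, pow_zero, one_mul]
      decide
    have hωW' : ω W = PadicInt.toZMod bU := by
      rw [hωW, hcW', map_mul, htU, one_mul]
    rw [hεW', hωW', hεU]
    generalize PadicInt.toZMod bU = e
    revert e; decide
  | succ j =>
    have hεW' : ε W = 0 := by
      rw [hεW, hbW', map_neg, map_mul, map_pow, toZMod_two]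
      simp
    rw [hεW', mul_zero, zero_add]
    by_cases hpar : 2 ∣ (j + 1 + 1)
    · rw [(ZMod.natCast_eq_zero_iff _ _).2 hpar, zero_mul]
    · have hj : j ≠ 0 := by rintro rfl; exact hpar ⟨1, rfl⟩
      obtain ⟨i, rfl⟩ : ∃ i, j = i + 1 := ⟨j - 1, by omega⟩
      have hcW' : cW = 2 ^ (i+1) * (2 ^ (i+2) * (U:ℤ_[2]) * U - U) := by
        apply mul_left_cancel₀ h8
        rw [hW] at hcW
        linear_combination -hcW
      have hωW' : ω W = 0 := by
        rw [hωW, hcW', map_mul, map_pow, toZMod_two]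
        simp
      rw [hωW', mul_zero]

include hε hω in
lemma caseB (U W : ℤ_[2]ˣ) (m : ℕ)
    (hW : (W : ℤ_[2]) = 2 ^ (m+1) - (U : ℤ_[2])) :
    ε U * ε W + ((m+1 : ℕ) : ZMod 2) * (ω W + ω U) = 0 := by
  obtain ⟨bU, hbU, hεU⟩ := hε U
  obtain ⟨bW, hbW, hεW⟩ := hε W
  obtain ⟨cU, hcU, hωU⟩ := hω U
  obtain ⟨cW, hcW, hωW⟩ := hω W
  have h8 : (8:ℤ_[2]) ≠ 0 := by norm_num
  have hbW' : bW = 2 ^ m - 1 - bU := by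
    apply mul_left_cancel₀ (two_ne_zero (α := ℤ_[2]))
    rw [hW, hbU] at hbW
    linear_combination -hbW
  cases m with
  | zero =>
    have hcW' : cW = cU - bU := by
      apply mul_left_cancel₀ h8
      rw [hW] at hcW
      linear_combination -hcW + hcU - 4 * hbU
    have hεW' : ε W = -PadicInt.toZMod bU := by
      rw [hεW, hbW']
      simp
    have hωW' : ω W = PadicInt.toZMod cU - PadicInt.toZMod bU := by
      rw [hωW, hcW', map_sub]
    rw [hεW', hωW', hεU, hωU]
    generalize PadicInt.toZMod bU = e
    generalize PadicInt.toZMod cU = f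
    revert e f; decide
  | succ j =>
    have hεW' : ε W = -1 - PadicInt.toZMod bU := by
      rw [hεW, hbW', map_sub, map_sub, map_pow, toZMod_two, map_one]
      simp
    by_cases hpar : 2 ∣ (j + 1 + 1)
    · rw [(ZMod.natCast_eq_zero_iff _ _).2 hpar, zero_mul, add_zero, hεW', hεU]
      generalize PadicInt.toZMod bU = e
      revert e; decide
    · have hj : j ≠ 0 := by rintro rfl; exact hpar ⟨1, rfl⟩
      obtain ⟨i, rfl⟩ : ∃ i, j = i + 1 := ⟨j - 1, by omega⟩
      have hcW' : cW = cU + 2 ^ (2*i+3) - 2 ^ (i+1) * (U:ℤ_[2]) := by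
        apply mul_left_cancel₀ h8
        rw [hW] at hcW
        linear_combination -hcW + hcU
      have hsum : ω W + ω U = 0 := by
        rw [hωW, hωU, hcW', map_sub, map_add, map_mul, map_pow, map_pow, toZMod_two]
        have : (2:ℕ)*i+3 ≠ 0 := by omega
        simp [zero_pow, this]
        generalize PadicInt.toZMod cU = f
        revert f; decide
      rw [hsum, mul_zero, add_zero, hεW', hεU]
      generalize PadicInt.toZMod bU = e
      revert e; decide
variable (v : ℚ_[2]ˣ → ℤ) (u : ℚ_[2]ˣ → ℤ_[2]ˣ)
variable (hvu : ∀ x : ℚ_[2]ˣ, (x : ℚ_[2]) = 2 ^ (v x) * ((u x : ℤ_[2]) : ℚ_[2]))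

include hvu in
lemma vu_mul (x y : ℚ_[2]ˣ) : v (x * y) = v x + v y ∧ u (x * y) = u x * u y := by
  apply unique_decomp
  have h := hvu (x * y)
  rw [Units.val_mul, hvu x, hvu y] at h
  rw [zpow_add₀ (two_ne_zero (α := ℚ_[2]))]
  push_cast
  linear_combination -h

include hvu in
lemma norm_eq (x : ℚ_[2]ˣ) : ‖(x : ℚ_[2])‖ = (2:ℝ)⁻¹ ^ (v x) := by
  rw [hvu x, norm_mul, norm_zpow, norm_two, PadicInt.padic_norm_e_of_padicInt,
    PadicInt.norm_units, mul_one]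

lemma coe2 : ((2:ℤ_[2]):ℚ_[2]) = 2 := by norm_cast

include hvu hε hω in
lemma key_rel (x y : ℚ_[2]ˣ) (hxy : (x : ℚ_[2]) + (y : ℚ_[2]) = 1) :
    ε (u x) * ε (u y) + (v x : ZMod 2) * ω (u y) + (v y : ZMod 2) * ω (u x) = 0 := by
  have hSA : StrictAnti (fun t : ℤ => ((2:ℝ)⁻¹) ^ t) :=
    zpow_right_strictAnti₀ (by norm_num) (by norm_num)
  have heq : (2:ℚ_[2]) ^ (v x) * ((u x : ℤ_[2]) : ℚ_[2])
      + (2:ℚ_[2]) ^ (v y) * ((u y : ℤ_[2]) : ℚ_[2]) = 1 := by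
    rw [← hvu x, ← hvu y]; exact hxy
  rcases lt_trichotomy (v x) 0 with hvx | hvx | hvx
  · -- v x < 0 : then v y = v x
    have hnx : (1:ℝ) < ‖(x : ℚ_[2])‖ := by
      rw [norm_eq v u hvu x]
      simpa using hSA hvx
    have hny : ‖(y : ℚ_[2])‖ = ‖(x : ℚ_[2])‖ := by
      have hyx : (y : ℚ_[2]) = 1 + -(x : ℚ_[2]) := by linear_combination hxy
      rw [hyx, Padic.add_eq_max_of_ne (by rw [norm_one, norm_neg]; exact ne_of_lt hnx),
        norm_one, norm_neg, max_eq_right (le_of_lt hnx)]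
    have hvyx : v y = v x := by
      apply hSA.injective
      show ((2:ℝ)⁻¹) ^ (v y) = ((2:ℝ)⁻¹) ^ (v x)
      rw [← norm_eq v u hvu x, ← norm_eq v u hvu y, hny]
    obtain ⟨k, hk⟩ : ∃ k : ℕ, (-(v x)).toNat = k + 1 :=
      ⟨(-(v x)).toNat - 1, by omega⟩
    have hzn : (2:ℚ_[2]) ^ (v x) * (2:ℚ_[2]) ^ (k+1 : ℕ) = 1 := by
      rw [← zpow_natCast, ← zpow_add₀ (two_ne_zero (α := ℚ_[2])),
        show v x + ((k+1:ℕ):ℤ) = 0 by push_cast; omega, zpow_zero]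
    have hdesc : ((u y : ℤ_[2]) : ℚ_[2]) = (((2 ^ (k+1) - (u x : ℤ_[2])) : ℤ_[2]) : ℚ_[2]) := by
      push_cast [coe2]
      apply mul_left_cancel₀ (zpow_ne_zero (v x) (two_ne_zero (α := ℚ_[2])))
      rw [hvyx] at heq
      linear_combination heq - hzn
    have hW : ((u y : ℤ_[2])) = 2 ^ (k+1) - (u x : ℤ_[2]) :=
      Subtype.coe_injective hdesc
    have hB := caseB ε ω hε hω (u x) (u y) k hW
    have hcast : ((v x : ℤ) : ZMod 2) = (((k+1 : ℕ)) : ZMod 2) := by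
      rw [show (v x) = -((k+1 : ℕ) : ℤ) by omega]
      push_cast
      generalize ((k : ZMod 2) + 1) = e
      revert e; decide
    rw [hvyx, hcast]
    linear_combination hB
  · -- v x = 0 : then v y > 0
    have hnx : ‖(x : ℚ_[2])‖ = 1 := by rw [norm_eq v u hvu x, hvx, zpow_zero]
    have hvy : 0 < v y := by
      rcases lt_trichotomy (v y) 0 with h | h | h
      · exfalso
        have hny : (1:ℝ) < ‖(y : ℚ_[2])‖ := by
          rw [norm_eq v u hvu y]; simpa using hSA h
        have hthis : ‖(x : ℚ_[2]) + (y : ℚ_[2])‖ = ‖(y : ℚ_[2])‖ := by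
          rw [Padic.add_eq_max_of_ne (q := (x:ℚ_[2])) (r := (y:ℚ_[2]))
              (by rw [hnx]; exact ne_of_lt hny),
            hnx, max_eq_right (le_of_lt hny)]
        rw [hxy, norm_one] at hthis
        exact absurd hthis.symm (ne_of_lt hny).symm
      · exfalso
        have hdesc : ((u x : ℤ_[2]) : ℚ_[2]) + ((u y : ℤ_[2]) : ℚ_[2]) = ((1 : ℤ_[2]) : ℚ_[2]) := by
          rw [hvx, h] at heq
          push_cast
          linear_combination heq
        have hsum : (u x : ℤ_[2]) + (u y : ℤ_[2]) = 1 := by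
          apply Subtype.coe_injective
          push_cast
          exact_mod_cast hdesc
        obtain ⟨b, hb, -⟩ := hε (u x)
        obtain ⟨b', hb', -⟩ := hε (u y)
        have hT := congrArg PadicInt.toZMod hsum
        rw [map_add, hb, hb'] at hT
        simp only [map_add, map_mul, map_one, toZMod_two, zero_mul, add_zero] at hT
        exact absurd hT (by decide)
      · exact h
    obtain ⟨k, hk⟩ : ∃ k : ℕ, (v y).toNat = k + 1 := ⟨(v y).toNat - 1, by omega⟩
    have hpow : (2:ℚ_[2]) ^ (v y) = (2:ℚ_[2]) ^ (k+1 : ℕ) := by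
      rw [← zpow_natCast]
      congr 1
      push_cast
      omega
    have hdesc : ((u x : ℤ_[2]) : ℚ_[2]) = (((1 - 2 ^ (k+1) * (u y : ℤ_[2])) : ℤ_[2]) : ℚ_[2]) := by
      push_cast [coe2]
      rw [hvx, zpow_zero, one_mul, hpow] at heq
      linear_combination heq
    have hW : ((u x : ℤ_[2])) = 1 - 2 ^ (k+1) * (u y : ℤ_[2]) :=
      Subtype.coe_injective hdesc
    have hA := caseA ε ω hε hω (u y) (u x) k hW
    have hcast : ((v y : ℤ) : ZMod 2) = (((k+1 : ℕ)) : ZMod 2) := by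
      rw [show (v y) = ((k+1 : ℕ) : ℤ) by omega]
      push_cast
      ring
    rw [hvx, hcast]
    push_cast at hA ⊢
    linear_combination hA
  · -- v x > 0 : then v y = 0
    have hnx : ‖(x : ℚ_[2])‖ < 1 := by
      rw [norm_eq v u hvu x]
      simpa using hSA hvx
    have hny : ‖(y : ℚ_[2])‖ = 1 := by
      have hyx : (y : ℚ_[2]) = 1 + -(x : ℚ_[2]) := by linear_combination hxy
      rw [hyx, Padic.add_eq_max_of_ne (by rw [norm_one, norm_neg]; exact (ne_of_lt hnx).symm),
        norm_one, norm_neg, max_eq_left (le_of_lt hnx)]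
    have hvy : v y = 0 := by
      apply hSA.injective
      show ((2:ℝ)⁻¹) ^ (v y) = ((2:ℝ)⁻¹) ^ (0:ℤ)
      rw [← norm_eq v u hvu y, hny, zpow_zero]
    obtain ⟨k, hk⟩ : ∃ k : ℕ, (v x).toNat = k + 1 := ⟨(v x).toNat - 1, by omega⟩
    have hpow : (2:ℚ_[2]) ^ (v x) = (2:ℚ_[2]) ^ (k+1 : ℕ) := by
      rw [← zpow_natCast]
      congr 1
      push_cast
      omega
    have hdesc : ((u y : ℤ_[2]) : ℚ_[2]) = (((1 - 2 ^ (k+1) * (u x : ℤ_[2])) : ℤ_[2]) : ℚ_[2]) := by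
      push_cast [coe2]
      rw [hvy, zpow_zero, one_mul, hpow] at heq
      linear_combination heq
    have hW : ((u y : ℤ_[2])) = 1 - 2 ^ (k+1) * (u x : ℤ_[2]) :=
      Subtype.coe_injective hdesc
    have hA := caseA ε ω hε hω (u x) (u y) k hW
    have hcast : ((v x : ℤ) : ZMod 2) = (((k+1 : ℕ)) : ZMod 2) := by
      rw [show (v x) = ((k+1 : ℕ) : ℤ) by omega]
      push_cast
      ring
    rw [hvy, hcast]
    push_cast at hA ⊢
    linear_combination hA

end Aux

/-- Given the decomposition `x = 2^(v x) · u x` of each `x ∈ ℚ_2ˣ` (with `u x ∈ ℤ_2ˣ`),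
and `ε, ω : ℤ_2ˣ → ℤ/2ℤ` the reductions mod 2 of `(u-1)/2` and `(u²-1)/8`, the map
`s₂(x,y) = (-1)^(ε(u_x)ε(u_y) + v(x)ω(u_y) + v(y)ω(u_x))` is a symbol on `ℚ_2` with
values in `{1, -1} = ℤˣ`. -/
theorem s2_isMulSymbol
    (v : ℚ_[2]ˣ → ℤ) (u : ℚ_[2]ˣ → ℤ_[2]ˣ)
    (hvu : ∀ x : ℚ_[2]ˣ, (x : ℚ_[2]) = 2 ^ (v x) * ((u x : ℤ_[2]) : ℚ_[2]))
    (ε ω : ℤ_[2]ˣ → ZMod 2)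
    (hε : ∀ a : ℤ_[2]ˣ, ∃ b : ℤ_[2], (a : ℤ_[2]) = 1 + 2 * b ∧ ε a = PadicInt.toZMod b)
    (hω : ∀ a : ℤ_[2]ˣ, ∃ c : ℤ_[2], (a : ℤ_[2]) ^ 2 = 1 + 8 * c ∧ ω a = PadicInt.toZMod c) :
    IsMulSymbol (fun x y : ℚ_[2]ˣ =>
      (-1 : ℤˣ) ^
        (ε (u x) * ε (u y) + (v x : ZMod 2) * ω (u y) + (v y : ZMod 2) * ω (u x)).val) := by
  refine ⟨?_, ?_, ?_⟩
  · intro x x' y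
    obtain ⟨hv, hu⟩ := vu_mul v u hvu x x'
    dsimp only
    have hE : ε (u (x * x')) * ε (u y) + (v (x * x') : ZMod 2) * ω (u y)
        + (v y : ZMod 2) * ω (u (x * x'))
        = (ε (u x) * ε (u y) + (v x : ZMod 2) * ω (u y) + (v y : ZMod 2) * ω (u x))
        + (ε (u x') * ε (u y) + (v x' : ZMod 2) * ω (u y) + (v y : ZMod 2) * ω (u x')) := by
      rw [hv, hu, eps_add ε hε, omega_add ω hω]
      push_cast
      ring
    rw [hE, zmod2_pow_val_add]
  · intro x y y'
    obtain ⟨hv, hu⟩ := vu_mul v u hvu y y'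
    dsimp only
    have hE : ε (u x) * ε (u (y * y')) + (v x : ZMod 2) * ω (u (y * y'))
        + (v (y * y') : ZMod 2) * ω (u x)
        = (ε (u x) * ε (u y) + (v x : ZMod 2) * ω (u y) + (v y : ZMod 2) * ω (u x))
        + (ε (u x) * ε (u y') + (v x : ZMod 2) * ω (u y') + (v y' : ZMod 2) * ω (u x)) := by
      rw [hv, hu, eps_add ε hε, omega_add ω hω]
      push_cast
      ring
    rw [hE, zmod2_pow_val_add]
  · intro x y hxy
    dsimp only
    rw [key_rel ε ω hε hω v u hvu x y hxy]
    simp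
end

section
/- Let x, y ∈ ℚ_2ˣ and let s_2(x, y) ∈ {1, -1} be defined by s_2(x, y) = (-1)^{ε(u_x)ε(u_y) + v(x)ω(u_y) + v(y)ω(u_x)}, where x = 2^{v(x)} u_x, y = 2^{v(y)} u_y with u_x, u_y ∈ ℤ_2ˣ, ε(u) is the reduction mod 2 of (u-1)/2 and ω(u) is the reduction mod 2 of (u²-1)/8. Then the equation x·R² + y·S² = 1 has a solution (R, S) ∈ ℚ_2 × ℚ_2 if and only if s_2(x, y) = 1. -/
open PadicInt

lemma sq_of_one_add_eight (c : ℤ_[2]) : IsSquare (1 + 8 * c) := by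
  let F : Polynomial ℤ_[2] := Polynomial.X ^ 2 - Polynomial.C (1 + 8 * c)
  have hnorm : ‖F.eval 1‖ < ‖(Polynomial.derivative F).eval 1‖ ^ 2 := by
    have h1 : F.eval 1 = -(8 * c) := by simp [F]
    have h2 : (Polynomial.derivative F).eval 1 = 2 := by simp [F]; norm_num
    have e2 : ‖(2 : ℤ_[2])‖ = 2⁻¹ := by
      have := @PadicInt.norm_p 2 ⟨Nat.prime_two⟩
      norm_num at this ⊢; exact_mod_cast this
    have e8 : ‖(8 : ℤ_[2])‖ = 8⁻¹ := by
      have h3 : (8 : ℤ_[2]) = 2 ^ 3 := by norm_num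
      rw [h3, norm_pow, e2]; norm_num
    rw [h1, h2, norm_neg, norm_mul, e2, e8]
    have := PadicInt.norm_le_one c
    nlinarith [norm_nonneg c]
  obtain ⟨r, hr, -⟩ := hensels_lemma (F := F) (a := 1) hnorm
  refine ⟨r, ?_⟩
  have h : r ^ 2 - (1 + 8 * c) = 0 := by simpa [F] using hr
  linear_combination -h

lemma mod8_sq (z : ℤ_[2]) (h : toZModPow 3 z = 1) : IsSquare z := by
  have hk : z - 1 ∈ RingHom.ker (toZModPow 3 : ℤ_[2] →+* ZMod (2^3)) := by
    rw [RingHom.mem_ker, map_sub, map_one, h, sub_self]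
  rw [ker_toZModPow, Ideal.mem_span_singleton] at hk
  obtain ⟨c, hc⟩ := hk
  have : z = 1 + 8 * c := by
    have h8 : ((2:ℕ) : ℤ_[2]) ^ 3 = 8 := by push_cast; norm_num
    rw [← h8]; linear_combination hc
  rw [this]; exact sq_of_one_add_eight c

lemma int_sq (N : ℤ) (h : (N : ZMod (2^3)) = 1) : IsSquare ((N : ℚ_[2])) := by
  obtain ⟨r, hr⟩ := mod8_sq (N : ℤ_[2]) (by rw [map_intCast]; exact h)
  refine ⟨(r : ℚ_[2]), ?_⟩
  have := congrArg (fun z : ℤ_[2] => (z : ℚ_[2])) hr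
  push_cast at this ⊢
  exact this

lemma suff (X Y N d e f : ℤ) (hN : (N : ZMod (2^3)) = 1) (hd : d ≠ 0) (hf : f ≠ 0)
    (key : X * N * f^2 + Y * e^2 * d^2 = d^2 * f^2) :
    ∃ R S : ℚ_[2], (X : ℚ_[2]) * R^2 + (Y : ℚ_[2]) * S^2 = 1 := by
  obtain ⟨q, hq⟩ := int_sq N hN
  have hd' : (d : ℚ_[2]) ≠ 0 := by exact_mod_cast Int.cast_ne_zero.mpr hd
  have hf' : (f : ℚ_[2]) ≠ 0 := by exact_mod_cast Int.cast_ne_zero.mpr hf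
  refine ⟨q / d, e / f, ?_⟩
  have key' : (X : ℚ_[2]) * N * f^2 + Y * e^2 * d^2 = d^2 * f^2 := by exact_mod_cast key
  have hQ : (q / d)^2 = (N : ℚ_[2]) / d^2 := by rw [div_pow, hq, sq]
  rw [hQ]
  field_simp
  linear_combination key'


lemma normQ2 : ‖(2 : ℚ_[2])‖ = 2⁻¹ := by
  have := @Padic.norm_p 2 ⟨Nat.prime_two⟩
  norm_num at this ⊢; exact_mod_cast this

lemma norm_two_pow_mul (Z : ℚ_[2]) (m : ℕ) (hm : (-Z.valuation).toNat ≤ m) :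
    ‖(2:ℚ_[2])^m * Z‖ ≤ 1 := by
  rcases eq_or_ne Z 0 with rfl | hZ
  · simp
  · rw [_root_.norm_mul, _root_.norm_pow, normQ2, Padic.norm_eq_zpow_neg_valuation hZ]
    have hv : -Z.valuation ≤ (m : ℤ) := le_trans (Int.self_le_toNat _) (by exact_mod_cast hm)
    have : ((2:ℝ))⁻¹ ^ m * (2:ℕ) ^ (-Z.valuation) = (2:ℝ) ^ (-(m:ℤ) + -Z.valuation) := by
      rw [zpow_add₀ (by norm_num : (2:ℝ) ≠ 0), inv_pow, ← zpow_natCast (2:ℝ), ← zpow_neg]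
      norm_num
    rw [this]
    exact zpow_le_one_of_nonpos₀ (by norm_num) (by omega)

lemma norm_two_pow_mul_eq (Z : ℚ_[2]) (hm : 1 ≤ (-Z.valuation).toNat) :
    ‖(2:ℚ_[2])^((-Z.valuation).toNat) * Z‖ = 1 := by
  have hZ : Z ≠ 0 := by
    rintro rfl; simp [Padic.valuation_zero] at hm
  have h0 : 0 ≤ -Z.valuation := by
    by_contra hlt; push_neg at hlt
    rw [Int.toNat_eq_zero.mpr hlt.le] at hm; omega
  have hv : ((-Z.valuation).toNat : ℤ) = -Z.valuation := Int.toNat_of_nonneg h0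
  rw [_root_.norm_mul, _root_.norm_pow, normQ2, Padic.norm_eq_zpow_neg_valuation hZ]
  have : ((2:ℝ))⁻¹ ^ (-Z.valuation).toNat * (2:ℕ) ^ (-Z.valuation) = (2:ℝ) ^ (-((-Z.valuation).toNat:ℤ) + -Z.valuation) := by
    rw [zpow_add₀ (by norm_num : (2:ℝ) ≠ 0), inv_pow, ← zpow_natCast (2:ℝ), ← zpow_neg]
    norm_num
  rw [this, hv]
  norm_num

lemma descent (x y : ℤ_[2]) (R S : ℚ_[2])
    (h : (x : ℚ_[2]) * R ^ 2 + (y : ℚ_[2]) * S ^ 2 = 1) :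
    ∃ r s t : ℤ_[2], x * r ^ 2 + y * s ^ 2 = t ^ 2 ∧
      (¬ (2:ℤ_[2]) ∣ r ∨ ¬ (2:ℤ_[2]) ∣ s ∨ ¬ (2:ℤ_[2]) ∣ t) := by
  set nR := (-R.valuation).toNat with hnR
  set nS := (-S.valuation).toNat with hnS
  set n := max nR nS with hn
  have hRle : ‖(2:ℚ_[2])^n * R‖ ≤ 1 := norm_two_pow_mul R n (le_max_left _ _)
  have hSle : ‖(2:ℚ_[2])^n * S‖ ≤ 1 := norm_two_pow_mul S n (le_max_right _ _)
  set ρ : ℤ_[2] := ⟨(2:ℚ_[2])^n * R, hRle⟩ with hρ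
  set σ : ℤ_[2] := ⟨(2:ℚ_[2])^n * S, hSle⟩ with hσ
  have cρ : (ρ : ℚ_[2]) = (2:ℚ_[2])^n * R := rfl
  have cσ : (σ : ℚ_[2]) = (2:ℚ_[2])^n * S := rfl
  have c2 : (((2:ℤ_[2])^n : ℤ_[2]) : ℚ_[2]) = (2:ℚ_[2])^n := by norm_cast
  refine ⟨ρ, σ, (2:ℤ_[2])^n, ?_, ?_⟩
  · apply Subtype.coe_injective
    push_cast [cρ, cσ]
    have : (((2:ℤ_[2]) : ℚ_[2]))^n = (2:ℚ_[2])^n := by norm_cast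
    rw [this]
    ring_nf
    ring_nf at h
    linear_combination ((2:ℚ_[2])^n)^2 * h
  · rcases Nat.eq_zero_or_pos n with h0 | hpos
    · right; right
      rw [h0, pow_zero]
      intro hdvd
      have := PadicInt.norm_lt_one_iff_dvd _ |>.mpr hdvd
      simp at this
    · rcases le_total nS nR with hle | hle
      · left
        have hnn : n = nR := by omega
        intro hdvd
        have hlt := (PadicInt.norm_lt_one_iff_dvd ρ).mpr hdvd
        have h1 : ‖ρ‖ = 1 := by
          rw [PadicInt.norm_def, cρ]
          simpa [hnn, hnR] using norm_two_pow_mul_eq R (by omega)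
        rw [h1] at hlt
        norm_num at hlt
      · right; left
        have hnn : n = nS := by omega
        intro hdvd
        have hlt := (PadicInt.norm_lt_one_iff_dvd σ).mpr hdvd
        have h1 : ‖σ‖ = 1 := by
          rw [PadicInt.norm_def, cσ]
          simpa [hnn, hnS] using norm_two_pow_mul_eq S (by omega)
        rw [h1] at hlt
        norm_num at hlt

lemma nosol (X Y : ℤ)
    (H : ∀ r s t : ZMod (2^4),
      (X : ZMod (2^4)) * r ^ 2 + (Y : ZMod (2^4)) * s ^ 2 = t ^ 2 →
      (ZMod.castHom (pow_dvd_pow 2 (by norm_num : 1 ≤ 4)) (ZMod (2^1)) r = 0 ∧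
       ZMod.castHom (pow_dvd_pow 2 (by norm_num : 1 ≤ 4)) (ZMod (2^1)) s = 0 ∧
       ZMod.castHom (pow_dvd_pow 2 (by norm_num : 1 ≤ 4)) (ZMod (2^1)) t = 0)) :
    ¬ ∃ R S : ℚ_[2], (X : ℚ_[2]) * R ^ 2 + (Y : ℚ_[2]) * S ^ 2 = 1 := by
  rintro ⟨R, S, hRS⟩
  obtain ⟨r, s, t, heq, hprim⟩ := descent (X : ℤ_[2]) (Y : ℤ_[2]) R S (by push_cast; exact hRS)
  have him := congrArg (PadicInt.toZModPow 4) heq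
  simp only [map_add, map_mul, map_pow, map_intCast] at him
  obtain ⟨h1, h2, h3⟩ := H _ _ _ him
  have dvd2 : ∀ z : ℤ_[2],
      ZMod.castHom (pow_dvd_pow 2 (by norm_num : 1 ≤ 4)) (ZMod (2^1)) (PadicInt.toZModPow 4 z) = 0 →
      (2:ℤ_[2]) ∣ z := by
    intro z hz
    have hc : PadicInt.toZModPow 1 z = 0 := by
      rw [← PadicInt.zmod_cast_comp_toZModPow 1 4 (by norm_num)]
      exact hz
    have hker : z ∈ RingHom.ker (PadicInt.toZModPow 1 : ℤ_[2] →+* ZMod (2^1)) := hc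
    rw [PadicInt.ker_toZModPow, Ideal.mem_span_singleton] at hker
    simpa using hker
  rcases hprim with hp | hp | hp
  · exact hp (dvd2 r h1)
  · exact hp (dvd2 s h2)
  · exact hp (dvd2 t h3)

lemma padicTwoNeZero : (2:ℤ_[2]) ≠ 0 := by
  intro h
  have e : ((2:ℤ_[2]):ℚ_[2]) = 2 := by norm_cast
  rw [h] at e
  simp at e

lemma padicEightNeZero : (8:ℤ_[2]) ≠ 0 := by
  intro h
  have e : ((8:ℤ_[2]):ℚ_[2]) = 8 := by norm_cast
  rw [h] at e
  simp at e

lemma eps_val {ε : ℤ_[2]ˣ → ZMod 2}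
    (hε : ∀ a : ℤ_[2]ˣ, ∃ b : ℤ_[2], (a : ℤ_[2]) = 1 + 2 * b ∧ ε a = PadicInt.toZMod b)
    (U : ℤ_[2]ˣ) (m k : ℤ) (δ : ℤ_[2]) (hw : (U:ℤ_[2]) = (m:ℤ_[2]) + 8*δ)
    (hmk : m = 1 + 2*k) : ε U = (k : ZMod 2) := by
  obtain ⟨b, hb, hbε⟩ := hε U
  have hm' : ((m:ℤ_[2])) = 1 + 2*(k:ℤ_[2]) := by exact_mod_cast hmk
  have h2 : (2:ℤ_[2]) * b = 2 * ((k:ℤ_[2]) + 4*δ) := by linear_combination hw - hb + hm'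
  have hb' : b = (k:ℤ_[2]) + 4*δ := mul_left_cancel₀ padicTwoNeZero h2
  have h4 : (PadicInt.toZMod (4*δ) : ZMod 2) = 0 := by
    rw [map_mul]
    have h4' : (PadicInt.toZMod (4:ℤ_[2]) : ZMod 2) = 0 := by
      have e : ((4:ℤ_[2])) = ((4:ℤ):ℤ_[2]) := by norm_num
      rw [e, map_intCast]; decide
    rw [h4', zero_mul]
  rw [hbε, hb', map_add, h4, add_zero, map_intCast]

lemma omega_val {ω : ℤ_[2]ˣ → ZMod 2}
    (hω : ∀ a : ℤ_[2]ˣ, ∃ c : ℤ_[2], (a : ℤ_[2])^2 = 1 + 8 * c ∧ ω a = PadicInt.toZMod c)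
    (U : ℤ_[2]ˣ) (m j : ℤ) (δ : ℤ_[2]) (hw : (U:ℤ_[2]) = (m:ℤ_[2]) + 8*δ)
    (hmj : m^2 = 1 + 8*j) : ω U = (j : ZMod 2) := by
  obtain ⟨c, hc, hcω⟩ := hω U
  have hm' : ((m:ℤ_[2]))^2 = 1 + 8*(j:ℤ_[2]) := by exact_mod_cast hmj
  have h8 : (8:ℤ_[2]) * c = 8 * ((j:ℤ_[2]) + 2*m*δ + 8*δ^2) := by
    linear_combination -hc + ((U:ℤ_[2]) + (m:ℤ_[2]) + 8*δ) * hw + hm'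
  have hc' : c = (j:ℤ_[2]) + 2*m*δ + 8*δ^2 := mul_left_cancel₀ padicEightNeZero h8
  have z1 : (PadicInt.toZMod (2*(m:ℤ_[2])*δ) : ZMod 2) = 0 := by
    rw [map_mul, map_mul]
    have : (PadicInt.toZMod (2:ℤ_[2]) : ZMod 2) = 0 := by
      have e : ((2:ℤ_[2])) = ((2:ℤ):ℤ_[2]) := by norm_num
      rw [e, map_intCast]; decide
    rw [this, zero_mul, zero_mul]
  have z2 : (PadicInt.toZMod (8*δ^2) : ZMod 2) = 0 := by
    rw [map_mul]
    have : (PadicInt.toZMod (8:ℤ_[2]) : ZMod 2) = 0 := by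
      have e : ((8:ℤ_[2])) = ((8:ℤ):ℤ_[2]) := by norm_num
      rw [e, map_intCast]; decide
    rw [this, zero_mul]
  rw [hcω, hc', map_add, map_add, z1, z2, add_zero, add_zero, map_intCast]


lemma unit_mod8 (U : ℤ_[2]ˣ) :
    PadicInt.toZModPow 3 (U:ℤ_[2]) = ((1:ℤ) : ZMod (2^3)) ∨
    PadicInt.toZModPow 3 (U:ℤ_[2]) = ((3:ℤ) : ZMod (2^3)) ∨
    PadicInt.toZModPow 3 (U:ℤ_[2]) = ((5:ℤ) : ZMod (2^3)) ∨
    PadicInt.toZModPow 3 (U:ℤ_[2]) = ((7:ℤ) : ZMod (2^3)) := by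
  have hodd : ZMod.castHom (pow_dvd_pow 2 (by norm_num : 1 ≤ 3)) (ZMod (2^1))
      (PadicInt.toZModPow 3 (U:ℤ_[2])) ≠ 0 := by
    intro h
    have hc : PadicInt.toZModPow 1 (U:ℤ_[2]) = 0 := by
      rw [← PadicInt.zmod_cast_comp_toZModPow 1 3 (by norm_num)]; exact h
    have hker : (U:ℤ_[2]) ∈ RingHom.ker (PadicInt.toZModPow 1 : ℤ_[2] →+* ZMod (2^1)) := hc
    rw [PadicInt.ker_toZModPow, Ideal.mem_span_singleton] at hker
    have hdvd : (2:ℤ_[2]) ∣ (U:ℤ_[2]) := by simpa using hker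
    have hlt := (PadicInt.norm_lt_one_iff_dvd _).mpr hdvd
    rw [PadicInt.norm_units] at hlt
    norm_num at hlt
  revert hodd
  generalize PadicInt.toZModPow 3 (U:ℤ_[2]) = z
  revert z
  decide

lemma odd_int_unit (m : ℤ) (hm : Odd m) : IsUnit (m : ℤ_[2]) := by
  rw [PadicInt.isUnit_iff]
  refine le_antisymm (PadicInt.norm_le_one _) ?_
  by_contra hlt
  push_neg at hlt
  rw [PadicInt.norm_int_lt_one_iff_dvd] at hlt
  obtain ⟨k, hk⟩ := hm
  omega

lemma classify_aux (vx : ℤ) (U : ℤ_[2]ˣ) (m : ℤ) (hmodd : Odd m)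
    (hmod : PadicInt.toZModPow 3 (U:ℤ_[2]) = ((m:ℤ) : ZMod (2^3))) :
    ∃ (a : ℕ) (t : ℚ_[2]) (δ : ℤ_[2]), a < 2 ∧ t ≠ 0 ∧
      (U:ℤ_[2]) = (m:ℤ_[2]) + 8*δ ∧
      (2:ℚ_[2])^vx * ((U:ℤ_[2]):ℚ_[2]) = ((2^a * m : ℤ) : ℚ_[2]) * t^2 ∧
      (vx : ZMod 2) = (a : ZMod 2) := by
  -- δ
  have hker : (U:ℤ_[2]) - (m:ℤ_[2]) ∈
      RingHom.ker (PadicInt.toZModPow 3 : ℤ_[2] →+* ZMod (2^3)) := by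
    rw [RingHom.mem_ker, map_sub, hmod, map_intCast, sub_self]
  rw [PadicInt.ker_toZModPow, Ideal.mem_span_singleton] at hker
  obtain ⟨δ, hδ⟩ := hker
  have hw : (U:ℤ_[2]) = (m:ℤ_[2]) + 8*δ := by
    have h8 : ((2:ℕ) : ℤ_[2]) ^ 3 = 8 := by push_cast; norm_num
    rw [← h8]; linear_combination hδ
  -- square part
  obtain ⟨mu, hmu⟩ := odd_int_unit m hmodd
  have hinv : ((mu⁻¹:ℤ_[2]ˣ):ℤ_[2]) * (mu:ℤ_[2]) = 1 := Units.inv_mul mu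
  have h2 := congrArg (PadicInt.toZModPow 3) hinv
  simp only [map_mul, map_one] at h2
  rw [hmu, map_intCast] at h2
  have hz1 : PadicInt.toZModPow 3 (((mu⁻¹ : ℤ_[2]ˣ) : ℤ_[2]) * (U:ℤ_[2])) = 1 := by
    simp only [map_mul]
    rw [hmod]
    exact h2
  obtain ⟨q, hq⟩ := mod8_sq _ hz1
  have hqne : q ≠ 0 := by
    rintro rfl
    rw [mul_zero] at hq
    rw [hq, map_zero] at hz1
    exact absurd hz1 (by decide)
  have hUq : (U:ℤ_[2]) = (m:ℤ_[2]) * (q * q) := by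
    have h3 := congrArg (fun z => (mu : ℤ_[2]) * z) hq
    rw [← mul_assoc] at h3
    have h4 : (mu : ℤ_[2]) * ((mu⁻¹ : ℤ_[2]ˣ) : ℤ_[2]) = 1 := Units.mul_inv mu
    rw [h4, one_mul] at h3
    rw [h3, hmu]
  -- exponent split
  set a : ℕ := (vx % 2).toNat with ha
  have haz : (a : ℤ) = vx % 2 := Int.toNat_of_nonneg (Int.emod_nonneg vx (by norm_num))
  have ha2 : a < 2 := by omega
  have hvx : vx = (a:ℤ) + (vx/2) * 2 := by omega
  refine ⟨a, (2:ℚ_[2])^(vx/2) * ((q:ℤ_[2]):ℚ_[2]), δ, ha2, ?_, hw, ?_, ?_⟩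
  · apply mul_ne_zero (zpow_ne_zero _ (by norm_num))
    intro h
    exact hqne (Subtype.coe_injective h)
  · have hsplit : (2:ℚ_[2])^vx = (2:ℚ_[2])^(a:ℕ) * ((2:ℚ_[2])^(vx/2))^2 := by
      have hsq : ((2:ℚ_[2])^(vx/2))^(2:ℕ) = (2:ℚ_[2])^((vx/2)*2) := by
        rw [← zpow_natCast ((2:ℚ_[2])^(vx/2)) 2, ← zpow_mul]
        norm_num
      rw [hsq, ← zpow_natCast (2:ℚ_[2]) a, ← zpow_add₀ (by norm_num : (2:ℚ_[2]) ≠ 0), ← hvx]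
    rw [hsplit]
    have hUQ : ((U:ℤ_[2]):ℚ_[2]) = (m:ℚ_[2]) * ((q:ℤ_[2]):ℚ_[2])^2 := by
      have := congrArg (fun z : ℤ_[2] => (z : ℚ_[2])) hUq
      push_cast at this
      rw [this]; ring
    rw [hUQ]
    push_cast
    ring
  · have h0 : ((vx/2 * 2 : ℤ) : ZMod 2) = 0 :=
      (ZMod.intCast_zmod_eq_zero_iff_dvd _ 2).mpr ⟨vx/2, by ring⟩
    have : ((vx : ℤ) : ZMod 2) = (((a:ℤ) + (vx/2) * 2 : ℤ) : ZMod 2) := by rw [← hvx]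
    rw [this, Int.cast_add, h0, add_zero, Int.cast_natCast]

lemma suff' (X Y N d e f : ℤ) (hN : (N : ZMod (2^3)) = 1) (hd : d ≠ 0) (hf : f ≠ 0)
    (key : Y * N * f^2 + X * e^2 * d^2 = d^2 * f^2) :
    ∃ R S : ℚ_[2], (X : ℚ_[2]) * R^2 + (Y : ℚ_[2]) * S^2 = 1 := by
  obtain ⟨R, S, h⟩ := suff Y X N d e f hN hd hf key
  exact ⟨S, R, by linear_combination h⟩

lemma classify_full (vx : ℤ) (U : ℤ_[2]ˣ) {ε ω : ℤ_[2]ˣ → ZMod 2}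
    (hε : ∀ a : ℤ_[2]ˣ, ∃ b : ℤ_[2], (a : ℤ_[2]) = 1 + 2 * b ∧ ε a = PadicInt.toZMod b)
    (hω : ∀ a : ℤ_[2]ˣ, ∃ c : ℤ_[2], (a : ℤ_[2]) ^ 2 = 1 + 8 * c ∧ ω a = PadicInt.toZMod c) :
    ∃ (a : ℕ) (m k j : ℤ) (t : ℚ_[2]), a < 2 ∧
      ((m = 1 ∧ k = 0 ∧ j = 0) ∨ (m = 3 ∧ k = 1 ∧ j = 1) ∨
       (m = 5 ∧ k = 2 ∧ j = 3) ∨ (m = 7 ∧ k = 3 ∧ j = 6)) ∧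
      t ≠ 0 ∧
      (2:ℚ_[2])^vx * ((U:ℤ_[2]):ℚ_[2]) = ((2^a * m : ℤ) : ℚ_[2]) * t^2 ∧
      ε U = (k : ZMod 2) ∧ ω U = (j : ZMod 2) ∧ (vx : ZMod 2) = (a : ZMod 2) := by
  obtain h | h | h | h := unit_mod8 U
  · obtain ⟨a, t, δ, ha, ht, hw, hdec, hv⟩ := classify_aux vx U 1 (by decide) h
    exact ⟨a, 1, 0, 0, t, ha, by norm_num, ht, hdec,
      eps_val hε U 1 0 δ hw (by norm_num), omega_val hω U 1 0 δ hw (by norm_num), hv⟩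
  · obtain ⟨a, t, δ, ha, ht, hw, hdec, hv⟩ := classify_aux vx U 3 (by decide) h
    exact ⟨a, 3, 1, 1, t, ha, by norm_num, ht, hdec,
      eps_val hε U 3 1 δ hw (by norm_num), omega_val hω U 3 1 δ hw (by norm_num), hv⟩
  · obtain ⟨a, t, δ, ha, ht, hw, hdec, hv⟩ := classify_aux vx U 5 (by decide) h
    exact ⟨a, 5, 2, 3, t, ha, by norm_num, ht, hdec,
      eps_val hε U 5 2 δ hw (by norm_num), omega_val hω U 5 3 δ hw (by norm_num), hv⟩
  · obtain ⟨a, t, δ, ha, ht, hw, hdec, hv⟩ := classify_aux vx U 7 (by decide) h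
    exact ⟨a, 7, 3, 6, t, ha, by norm_num, ht, hdec,
      eps_val hε U 7 3 δ hw (by norm_num), omega_val hω U 7 6 δ hw (by norm_num), hv⟩

set_option maxHeartbeats 4000000 in
/-- Given the decomposition `x = 2^(v x) · u x` of each `x ∈ ℚ_2ˣ` (with `u x ∈ ℤ_2ˣ`),
and `ε, ω : ℤ_2ˣ → ℤ/2ℤ` the reductions mod 2 of `(u-1)/2` and `(u²-1)/8`, the conic
`x·R² + y·S² = 1` has a solution over `ℚ_2` iff
`s₂(x,y) = (-1)^(ε(u_x)ε(u_y) + v(x)ω(u_y) + v(y)ω(u_x)) = 1`. -/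
theorem q2_conic_solvable_iff
    (v : ℚ_[2]ˣ → ℤ) (u : ℚ_[2]ˣ → ℤ_[2]ˣ)
    (hvu : ∀ x : ℚ_[2]ˣ, (x : ℚ_[2]) = 2 ^ (v x) * ((u x : ℤ_[2]) : ℚ_[2]))
    (ε ω : ℤ_[2]ˣ → ZMod 2)
    (hε : ∀ a : ℤ_[2]ˣ, ∃ b : ℤ_[2], (a : ℤ_[2]) = 1 + 2 * b ∧ ε a = PadicInt.toZMod b)
    (hω : ∀ a : ℤ_[2]ˣ, ∃ c : ℤ_[2], (a : ℤ_[2]) ^ 2 = 1 + 8 * c ∧ ω a = PadicInt.toZMod c)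
    (x y : ℚ_[2]ˣ) :
    (∃ R S : ℚ_[2], (x : ℚ_[2]) * R ^ 2 + (y : ℚ_[2]) * S ^ 2 = 1) ↔
      (-1 : ℤˣ) ^
        (ε (u x) * ε (u y) + (v x : ZMod 2) * ω (u y) + (v y : ZMod 2) * ω (u x)).val
        = 1 := by
  obtain ⟨a, m, k, j, t, ha, hm, ht, hxe, hεx, hωx, hvx⟩ := classify_full (v x) (u x) hε hω
  obtain ⟨b, n, l, i, s, hb, hn, hs, hye, hεy, hωy, hvy⟩ := classify_full (v y) (u y) hε hω
  have ex : (x : ℚ_[2]) = ((2^a * m : ℤ) : ℚ_[2]) * t^2 := by rw [hvu x]; exact hxe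
  have ey : (y : ℚ_[2]) = ((2^b * n : ℤ) : ℚ_[2]) * s^2 := by rw [hvu y]; exact hye
  have hiff : (∃ R S : ℚ_[2], (x : ℚ_[2]) * R ^ 2 + (y : ℚ_[2]) * S ^ 2 = 1) ↔
      (∃ R S : ℚ_[2], ((2^a * m : ℤ) : ℚ_[2]) * R ^ 2 + ((2^b * n : ℤ) : ℚ_[2]) * S ^ 2 = 1) := by
    constructor
    · rintro ⟨R, S, hRS⟩
      rw [ex, ey] at hRS
      exact ⟨t * R, s * S, by linear_combination hRS⟩
    · rintro ⟨R, S, hRS⟩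
      refine ⟨R / t, S / s, ?_⟩
      rw [ex, ey]
      push_cast at hRS ⊢
      field_simp
      linear_combination hRS
  rw [hiff, hεx, hεy, hωx, hωy, hvx, hvy]
  rcases (show a = 0 ∨ a = 1 by omega) with rfl | rfl
  · rcases hm with ⟨rfl, rfl, rfl⟩ | ⟨rfl, rfl, rfl⟩ | ⟨rfl, rfl, rfl⟩ | ⟨rfl, rfl, rfl⟩
    · rcases (show b = 0 ∨ b = 1 by omega) with rfl | rfl
      · rcases hn with ⟨rfl, rfl, rfl⟩ | ⟨rfl, rfl, rfl⟩ | ⟨rfl, rfl, rfl⟩ | ⟨rfl, rfl, rfl⟩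
        · exact iff_of_true (suff (2^0*1) (2^0*1) (1) 1 0 1 (by decide) (by norm_num) (by norm_num) (by norm_num)) (by decide)
        · exact iff_of_true (suff (2^0*1) (2^0*3) (1) 1 0 1 (by decide) (by norm_num) (by norm_num) (by norm_num)) (by decide)
        · exact iff_of_true (suff (2^0*1) (2^0*5) (1) 1 0 1 (by decide) (by norm_num) (by norm_num) (by norm_num)) (by decide)
        · exact iff_of_true (suff (2^0*1) (2^0*7) (1) 1 0 1 (by decide) (by norm_num) (by norm_num) (by norm_num)) (by decide)
      · rcases hn with ⟨rfl, rfl, rfl⟩ | ⟨rfl, rfl, rfl⟩ | ⟨rfl, rfl, rfl⟩ | ⟨rfl, rfl, rfl⟩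
        · exact iff_of_true (suff (2^0*1) (2^1*1) (1) 1 0 1 (by decide) (by norm_num) (by norm_num) (by norm_num)) (by decide)
        · exact iff_of_true (suff (2^0*1) (2^1*3) (1) 1 0 1 (by decide) (by norm_num) (by norm_num) (by norm_num)) (by decide)
        · exact iff_of_true (suff (2^0*1) (2^1*5) (1) 1 0 1 (by decide) (by norm_num) (by norm_num) (by norm_num)) (by decide)
        · exact iff_of_true (suff (2^0*1) (2^1*7) (1) 1 0 1 (by decide) (by norm_num) (by norm_num) (by norm_num)) (by decide)
    · rcases (show b = 0 ∨ b = 1 by omega) with rfl | rfl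
      · rcases hn with ⟨rfl, rfl, rfl⟩ | ⟨rfl, rfl, rfl⟩ | ⟨rfl, rfl, rfl⟩ | ⟨rfl, rfl, rfl⟩
        · exact iff_of_true (suff (2^0*3) (2^0*1) (1) 2 1 2 (by decide) (by norm_num) (by norm_num) (by norm_num)) (by decide)
        · exact iff_of_false (nosol (2^0*3) (2^0*3) (by decide)) (by decide)
        · exact iff_of_true (suff (2^0*3) (2^0*5) (33) 12 1 4 (by decide) (by norm_num) (by norm_num) (by norm_num)) (by decide)
        · exact iff_of_false (nosol (2^0*3) (2^0*7) (by decide)) (by decide)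
      · rcases hn with ⟨rfl, rfl, rfl⟩ | ⟨rfl, rfl, rfl⟩ | ⟨rfl, rfl, rfl⟩ | ⟨rfl, rfl, rfl⟩
        · exact iff_of_false (nosol (2^0*3) (2^1*1) (by decide)) (by decide)
        · exact iff_of_true (suff (2^0*3) (2^1*3) (-15) 3 1 1 (by decide) (by norm_num) (by norm_num) (by norm_num)) (by decide)
        · exact iff_of_false (nosol (2^0*3) (2^1*5) (by decide)) (by decide)
        · exact iff_of_true (suff (2^0*3) (2^1*7) (-39) 3 1 1 (by decide) (by norm_num) (by norm_num) (by norm_num)) (by decide)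
    · rcases (show b = 0 ∨ b = 1 by omega) with rfl | rfl
      · rcases hn with ⟨rfl, rfl, rfl⟩ | ⟨rfl, rfl, rfl⟩ | ⟨rfl, rfl, rfl⟩ | ⟨rfl, rfl, rfl⟩
        · exact iff_of_true (suff (2^0*5) (2^0*1) (-7) 1 6 1 (by decide) (by norm_num) (by norm_num) (by norm_num)) (by decide)
        · exact iff_of_true (suff (2^0*5) (2^0*3) (-55) 5 2 1 (by decide) (by norm_num) (by norm_num) (by norm_num)) (by decide)
        · exact iff_of_true (suff (2^0*5) (2^0*5) (-95) 5 2 1 (by decide) (by norm_num) (by norm_num) (by norm_num)) (by decide)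
        · exact iff_of_true (suff (2^0*5) (2^0*7) (-135) 5 2 1 (by decide) (by norm_num) (by norm_num) (by norm_num)) (by decide)
      · rcases hn with ⟨rfl, rfl, rfl⟩ | ⟨rfl, rfl, rfl⟩ | ⟨rfl, rfl, rfl⟩ | ⟨rfl, rfl, rfl⟩
        · exact iff_of_false (nosol (2^0*5) (2^1*1) (by decide)) (by decide)
        · exact iff_of_false (nosol (2^0*5) (2^1*3) (by decide)) (by decide)
        · exact iff_of_false (nosol (2^0*5) (2^1*5) (by decide)) (by decide)
        · exact iff_of_false (nosol (2^0*5) (2^1*7) (by decide)) (by decide)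
    · rcases (show b = 0 ∨ b = 1 by omega) with rfl | rfl
      · rcases hn with ⟨rfl, rfl, rfl⟩ | ⟨rfl, rfl, rfl⟩ | ⟨rfl, rfl, rfl⟩ | ⟨rfl, rfl, rfl⟩
        · exact iff_of_true (suff (2^0*7) (2^0*1) (1) 4 3 4 (by decide) (by norm_num) (by norm_num) (by norm_num)) (by decide)
        · exact iff_of_false (nosol (2^0*7) (2^0*3) (by decide)) (by decide)
        · exact iff_of_true (suff (2^0*7) (2^0*5) (-7) 14 1 2 (by decide) (by norm_num) (by norm_num) (by norm_num)) (by decide)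
        · exact iff_of_false (nosol (2^0*7) (2^0*7) (by decide)) (by decide)
      · rcases hn with ⟨rfl, rfl, rfl⟩ | ⟨rfl, rfl, rfl⟩ | ⟨rfl, rfl, rfl⟩ | ⟨rfl, rfl, rfl⟩
        · exact iff_of_true (suff (2^0*7) (2^1*1) (-7) 1 5 1 (by decide) (by norm_num) (by norm_num) (by norm_num)) (by decide)
        · exact iff_of_false (nosol (2^0*7) (2^1*3) (by decide)) (by decide)
        · exact iff_of_true (suff (2^0*7) (2^1*5) (-63) 7 1 1 (by decide) (by norm_num) (by norm_num) (by norm_num)) (by decide)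
        · exact iff_of_false (nosol (2^0*7) (2^1*7) (by decide)) (by decide)
  · rcases hm with ⟨rfl, rfl, rfl⟩ | ⟨rfl, rfl, rfl⟩ | ⟨rfl, rfl, rfl⟩ | ⟨rfl, rfl, rfl⟩
    · rcases (show b = 0 ∨ b = 1 by omega) with rfl | rfl
      · rcases hn with ⟨rfl, rfl, rfl⟩ | ⟨rfl, rfl, rfl⟩ | ⟨rfl, rfl, rfl⟩ | ⟨rfl, rfl, rfl⟩
        · exact iff_of_true (suff' (2^1*1) (2^0*1) (1) 1 0 1 (by decide) (by norm_num) (by norm_num) (by norm_num)) (by decide)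
        · exact iff_of_false (nosol (2^1*1) (2^0*3) (by decide)) (by decide)
        · exact iff_of_false (nosol (2^1*1) (2^0*5) (by decide)) (by decide)
        · exact iff_of_true (suff (2^1*1) (2^0*7) (-31) 1 3 1 (by decide) (by norm_num) (by norm_num) (by norm_num)) (by decide)
      · rcases hn with ⟨rfl, rfl, rfl⟩ | ⟨rfl, rfl, rfl⟩ | ⟨rfl, rfl, rfl⟩ | ⟨rfl, rfl, rfl⟩
        · exact iff_of_true (suff (2^1*1) (2^1*1) (1) 2 1 2 (by decide) (by norm_num) (by norm_num) (by norm_num)) (by decide)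
        · exact iff_of_false (nosol (2^1*1) (2^1*3) (by decide)) (by decide)
        · exact iff_of_false (nosol (2^1*1) (2^1*5) (by decide)) (by decide)
        · exact iff_of_true (suff (2^1*1) (2^1*7) (1) 4 1 4 (by decide) (by norm_num) (by norm_num) (by norm_num)) (by decide)
    · rcases (show b = 0 ∨ b = 1 by omega) with rfl | rfl
      · rcases hn with ⟨rfl, rfl, rfl⟩ | ⟨rfl, rfl, rfl⟩ | ⟨rfl, rfl, rfl⟩ | ⟨rfl, rfl, rfl⟩
        · exact iff_of_true (suff' (2^1*3) (2^0*1) (1) 1 0 1 (by decide) (by norm_num) (by norm_num) (by norm_num)) (by decide)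
        · exact iff_of_true (suff (2^1*3) (2^0*3) (-39) 3 3 1 (by decide) (by norm_num) (by norm_num) (by norm_num)) (by decide)
        · exact iff_of_false (nosol (2^1*3) (2^0*5) (by decide)) (by decide)
        · exact iff_of_false (nosol (2^1*3) (2^0*7) (by decide)) (by decide)
      · rcases hn with ⟨rfl, rfl, rfl⟩ | ⟨rfl, rfl, rfl⟩ | ⟨rfl, rfl, rfl⟩ | ⟨rfl, rfl, rfl⟩
        · exact iff_of_false (nosol (2^1*3) (2^1*1) (by decide)) (by decide)
        · exact iff_of_false (nosol (2^1*3) (2^1*3) (by decide)) (by decide)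
        · exact iff_of_true (suff (2^1*3) (2^1*5) (1) 4 1 4 (by decide) (by norm_num) (by norm_num) (by norm_num)) (by decide)
        · exact iff_of_true (suff (2^1*3) (2^1*7) (-15) 6 1 2 (by decide) (by norm_num) (by norm_num) (by norm_num)) (by decide)
    · rcases (show b = 0 ∨ b = 1 by omega) with rfl | rfl
      · rcases hn with ⟨rfl, rfl, rfl⟩ | ⟨rfl, rfl, rfl⟩ | ⟨rfl, rfl, rfl⟩ | ⟨rfl, rfl, rfl⟩
        · exact iff_of_true (suff' (2^1*5) (2^0*1) (1) 1 0 1 (by decide) (by norm_num) (by norm_num) (by norm_num)) (by decide)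
        · exact iff_of_false (nosol (2^1*5) (2^0*3) (by decide)) (by decide)
        · exact iff_of_false (nosol (2^1*5) (2^0*5) (by decide)) (by decide)
        · exact iff_of_true (suff (2^1*5) (2^0*7) (-15) 5 1 1 (by decide) (by norm_num) (by norm_num) (by norm_num)) (by decide)
      · rcases hn with ⟨rfl, rfl, rfl⟩ | ⟨rfl, rfl, rfl⟩ | ⟨rfl, rfl, rfl⟩ | ⟨rfl, rfl, rfl⟩
        · exact iff_of_false (nosol (2^1*5) (2^1*1) (by decide)) (by decide)
        · exact iff_of_true (suff (2^1*5) (2^1*3) (1) 4 1 4 (by decide) (by norm_num) (by norm_num) (by norm_num)) (by decide)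
        · exact iff_of_true (suff (2^1*5) (2^1*5) (-15) 10 1 2 (by decide) (by norm_num) (by norm_num) (by norm_num)) (by decide)
        · exact iff_of_false (nosol (2^1*5) (2^1*7) (by decide)) (by decide)
    · rcases (show b = 0 ∨ b = 1 by omega) with rfl | rfl
      · rcases hn with ⟨rfl, rfl, rfl⟩ | ⟨rfl, rfl, rfl⟩ | ⟨rfl, rfl, rfl⟩ | ⟨rfl, rfl, rfl⟩
        · exact iff_of_true (suff' (2^1*7) (2^0*1) (1) 1 0 1 (by decide) (by norm_num) (by norm_num) (by norm_num)) (by decide)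
        · exact iff_of_true (suff (2^1*7) (2^0*3) (-7) 7 1 1 (by decide) (by norm_num) (by norm_num) (by norm_num)) (by decide)
        · exact iff_of_false (nosol (2^1*7) (2^0*5) (by decide)) (by decide)
        · exact iff_of_false (nosol (2^1*7) (2^0*7) (by decide)) (by decide)
      · rcases hn with ⟨rfl, rfl, rfl⟩ | ⟨rfl, rfl, rfl⟩ | ⟨rfl, rfl, rfl⟩ | ⟨rfl, rfl, rfl⟩
        · exact iff_of_true (suff (2^1*7) (2^1*1) (1) 4 1 4 (by decide) (by norm_num) (by norm_num) (by norm_num)) (by decide)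
        · exact iff_of_true (suff (2^1*7) (2^1*3) (-7) 14 1 2 (by decide) (by norm_num) (by norm_num) (by norm_num)) (by decide)
        · exact iff_of_false (nosol (2^1*7) (2^1*5) (by decide)) (by decide)
        · exact iff_of_false (nosol (2^1*7) (2^1*7) (by decide)) (by decide)
end

section
/- Let k be a field and F = k((T)) the field of formal Laurent series over k, with T-adic valuation v : Fˣ → ℤ (v(x) is the order of x). For x, y ∈ Fˣ, the element t(x, y) = (-1)^{v(x)v(y)} · x^{v(y)} · y^{-v(x)} has order 0, i.e. lies in k[[T]]ˣ, and the map s : Fˣ × Fˣ → kˣ sending (x, y) to the constant coefficient of t(x, y) is a symbol on F with values in the multiplicative group kˣ: it is multiplicative in each variable and s(x, y) = 1 whenever x + y = 1. -/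
/-- The element `(-1)^(v(x)v(y)) · x^(v(y)) · y^(-v(x))` of `k((T))ˣ`, where `v` is the
`T`-adic valuation (the order). -/
noncomputable def lsTame (k : Type*) [Field k] (x y : (LaurentSeries k)ˣ) :
    (LaurentSeries k)ˣ :=
  (-1) ^ ((x : LaurentSeries k).order * (y : LaurentSeries k).order) *
    x ^ (y : LaurentSeries k).order * y ^ (-(x : LaurentSeries k).order)

namespace LsTameAux

open HahnSeries

variable {k : Type*} [Field k]

lemma v_mul (x y : (LaurentSeries k)ˣ) :
    ((x * y : (LaurentSeries k)ˣ) : LaurentSeries k).order =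
      (x : LaurentSeries k).order + (y : LaurentSeries k).order := by
  rw [Units.val_mul]
  exact order_mul x.ne_zero y.ne_zero

/-- Order as a monoid hom on units. -/
noncomputable def lsOrd (k : Type*) [Field k] : (LaurentSeries k)ˣ →* Multiplicative ℤ where
  toFun x := Multiplicative.ofAdd (x : LaurentSeries k).order
  map_one' := by simp [order_one]
  map_mul' x y := by
    simp only [v_mul]
    rfl

lemma v_zpow (x : (LaurentSeries k)ˣ) (n : ℤ) :
    ((x ^ n : (LaurentSeries k)ˣ) : LaurentSeries k).order = n * (x : LaurentSeries k).order := by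
  have h := map_zpow (lsOrd k) x n
  have h2 := congrArg Multiplicative.toAdd h
  simpa [lsOrd, smul_eq_mul] using h2

lemma v_neg_one : ((-1 : (LaurentSeries k)ˣ) : LaurentSeries k).order = 0 := by
  rw [Units.val_neg, Units.val_one, order_neg, order_one]

lemma lc_mul {f g : LaurentSeries k} (hf : f ≠ 0) (hg : g ≠ 0) :
    (f * g).leadingCoeff = f.leadingCoeff * g.leadingCoeff := by
  rw [leadingCoeff_eq, order_mul hf hg, coeff_mul_order_add_order]

lemma lc_neg (f : LaurentSeries k) : (-f).leadingCoeff = -f.leadingCoeff := by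
  rw [leadingCoeff_eq, leadingCoeff_eq, order_neg, coeff_neg]

/-- Leading coefficient as a monoid hom on units. -/
noncomputable def lsLC (k : Type*) [Field k] : (LaurentSeries k)ˣ →* kˣ where
  toFun x := Units.mk0 (x : LaurentSeries k).leadingCoeff (leadingCoeff_ne_zero.mpr x.ne_zero)
  map_one' := by
    ext
    simp [leadingCoeff_one]
  map_mul' x y := by
    ext
    simp [lc_mul x.ne_zero y.ne_zero]

@[simp] lemma lsLC_val (x : (LaurentSeries k)ˣ) :
    (lsLC k x : k) = (x : LaurentSeries k).leadingCoeff := rfl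

lemma lsLC_neg_one : lsLC k (-1) = -1 := by
  ext
  rw [lsLC_val, Units.val_neg, Units.val_one, Units.val_neg, Units.val_one, lc_neg,
    leadingCoeff_one]

lemma order_lsTame (x y : (LaurentSeries k)ˣ) :
    ((lsTame k x y : (LaurentSeries k)ˣ) : LaurentSeries k).order = 0 := by
  unfold lsTame
  rw [v_mul, v_mul, v_zpow, v_zpow, v_zpow, v_neg_one]
  ring

lemma s_eq (x y : (LaurentSeries k)ˣ) :
    lsLC k (lsTame k x y) =
      (-1) ^ ((x : LaurentSeries k).order * (y : LaurentSeries k).order) *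
        (lsLC k x) ^ (y : LaurentSeries k).order *
        (lsLC k y) ^ (-(x : LaurentSeries k).order) := by
  unfold lsTame
  rw [map_mul, map_mul, map_zpow, map_zpow, map_zpow, lsLC_neg_one]

lemma steinberg_neg {x y : LaurentSeries k} (hx : x ≠ 0) (h : x + y = 1)
    (ha : x.order < 0) : y.order = x.order ∧ y.leadingCoeff = -x.leadingCoeff := by
  have h' : y = 1 + -x := by linear_combination h
  have hot : (-x).orderTop < (1 : LaurentSeries k).orderTop := by
    rw [orderTop_neg, orderTop_one, ← order_eq_orderTop_of_ne_zero hx]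
    exact_mod_cast ha
  have hoy : y.orderTop = x.orderTop := by
    rw [h', orderTop_add_eq_right hot, orderTop_neg]
  have hy : y ≠ 0 := by
    intro h0
    rw [h0, orderTop_zero, eq_comm, orderTop_eq_top] at hoy
    exact hx hoy
  constructor
  · have := hoy
    rw [← order_eq_orderTop_of_ne_zero hy, ← order_eq_orderTop_of_ne_zero hx] at this
    exact_mod_cast this
  · rw [h', leadingCoeff_add_eq_right hot, lc_neg]

lemma steinberg_pos {x y : LaurentSeries k} (hx : x ≠ 0) (h : x + y = 1)
    (ha : 0 < x.order) : y.order = 0 ∧ y.leadingCoeff = 1 := by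
  have h' : y = 1 + -x := by linear_combination h
  have hot : (1 : LaurentSeries k).orderTop < (-x).orderTop := by
    rw [orderTop_neg, orderTop_one, ← order_eq_orderTop_of_ne_zero hx]
    exact_mod_cast ha
  have hoy : y.orderTop = (1 : LaurentSeries k).orderTop := by
    rw [h', orderTop_add_eq_left hot]
  have hy : y ≠ 0 := by
    intro h0
    rw [h0, orderTop_zero, eq_comm, orderTop_eq_top, ← orderTop_eq_top,
      orderTop_one] at hoy
    exact absurd hoy (by simp)
  constructor
  · have := hoy
    rw [← order_eq_orderTop_of_ne_zero hy, orderTop_one] at this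
    exact_mod_cast this
  · rw [h', leadingCoeff_add_eq_left hot, leadingCoeff_one]

lemma lsLC_unit_eq (x : (LaurentSeries k)ˣ) {c : k} (hc : c ≠ 0)
    (h : (x : LaurentSeries k).leadingCoeff = c) : lsLC k x = Units.mk0 c hc := by
  ext
  simpa using h

lemma steinberg (x y : (LaurentSeries k)ˣ)
    (h : (x : LaurentSeries k) + (y : LaurentSeries k) = 1) :
    lsLC k (lsTame k x y) = 1 := by
  rw [s_eq]
  rcases lt_trichotomy (x : LaurentSeries k).order 0 with hlt | heq | hgt
  · obtain ⟨h1, h2⟩ := steinberg_neg x.ne_zero h hlt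
    have hLy : lsLC k y = -(lsLC k x) := by
      ext
      simpa using h2
    rw [h1, hLy]
    set a := (x : LaurentSeries k).order with ha
    rw [show (-(lsLC k x)) = (-1) * lsLC k x from (neg_one_mul _).symm, mul_zpow,
      mul_mul_mul_comm, ← zpow_add, ← zpow_add, add_neg_cancel, zpow_zero, mul_one]
    apply Even.neg_one_zpow
    have h3 : a * a + -a = (a - 1) * a := by ring
    rw [h3]
    simpa using Int.even_mul_succ_self (a - 1)
  · rcases lt_trichotomy (y : LaurentSeries k).order 0 with hbl | hbe | hbg
    · obtain ⟨h1, _⟩ := steinberg_neg y.ne_zero (by rw [add_comm]; exact h) hbl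
      omega
    · rw [heq, hbe]
      simp
    · obtain ⟨h1, h2⟩ := steinberg_pos y.ne_zero (by rw [add_comm]; exact h) hbg
      have hLx : lsLC k x = 1 := by
        ext
        simpa using h2
      rw [heq, hLx]
      simp
  · obtain ⟨h1, h2⟩ := steinberg_pos x.ne_zero h hgt
    have hLy : lsLC k y = 1 := by
      ext
      simpa using h2
    rw [h1, hLy]
    simp

lemma s_mul_left (x x' y : (LaurentSeries k)ˣ) :
    lsLC k (lsTame k (x * x') y) = lsLC k (lsTame k x y) * lsLC k (lsTame k x' y) := by
  rw [s_eq, s_eq, s_eq, v_mul, map_mul, add_mul, neg_add, zpow_add, zpow_add, mul_zpow]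
  simp only [mul_assoc, mul_comm, mul_left_comm]

lemma s_mul_right (x y y' : (LaurentSeries k)ˣ) :
    lsLC k (lsTame k x (y * y')) = lsLC k (lsTame k x y) * lsLC k (lsTame k x y') := by
  rw [s_eq, s_eq, s_eq, v_mul, map_mul, mul_add, zpow_add, zpow_add, mul_zpow]
  simp only [mul_assoc, mul_comm, mul_left_comm]

end LsTameAux

/-- The element `t(x,y) = (-1)^(v(x)v(y)) x^(v(y)) y^(-v(x))` has order `0` (hence lies
in `k[[T]]ˣ`), and sending `(x, y)` to the constant coefficient of `t(x,y)` gives a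
symbol on `k((T))` with values in `kˣ`. -/
theorem laurentSeries_tame_symbol (k : Type*) [Field k] :
    (∀ x y : (LaurentSeries k)ˣ,
      ((lsTame k x y : (LaurentSeries k)ˣ) : LaurentSeries k).order = 0) ∧
    ∃ s : (LaurentSeries k)ˣ → (LaurentSeries k)ˣ → kˣ,
      (∀ x y : (LaurentSeries k)ˣ,
        (s x y : k) = ((lsTame k x y : (LaurentSeries k)ˣ) : LaurentSeries k).coeff 0) ∧
      IsMulSymbol s := by
  refine ⟨LsTameAux.order_lsTame, fun x y => LsTameAux.lsLC k (lsTame k x y), ?_,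
    LsTameAux.s_mul_left, LsTameAux.s_mul_right, LsTameAux.steinberg⟩
  intro x y
  rw [LsTameAux.lsLC_val, HahnSeries.leadingCoeff_eq, LsTameAux.order_lsTame]
end

section
/- Let k be a field and F = k(T) the field of rational functions over k. For x ∈ Fˣ, write x = f/g with f, g nonzero polynomials and define c(x) ∈ kˣ as leadingCoeff(f)/leadingCoeff(g); c(x) is well defined (independent of the representation) and c : Fˣ → kˣ is a group homomorphism. Then for every commutative group A (written additively) and every A-valued symbol t on k, the map (x, y) ↦ t(c(x), c(y)) is an A-valued symbol on F = k(T). -/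
section Aux

variable {F A : Type*} [Field F] [AddCommGroup A] {t : Fˣ → Fˣ → A}

lemma IsAddSymbol.one_left (ht : IsAddSymbol t) (y : Fˣ) : t 1 y = 0 := by
  have h := ht.1 1 1 y
  rw [mul_one] at h
  exact (right_eq_add.mp h)

lemma IsAddSymbol.one_right (ht : IsAddSymbol t) (x : Fˣ) : t x 1 = 0 := by
  have h := ht.2.1 x 1 1
  rw [mul_one] at h
  exact (right_eq_add.mp h)

lemma IsAddSymbol.inv_right (ht : IsAddSymbol t) (x y : Fˣ) : t x y⁻¹ = - t x y := by
  have h := ht.2.1 x y y⁻¹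
  rw [mul_inv_cancel, ht.one_right] at h
  exact eq_neg_of_add_eq_zero_right h.symm

lemma IsAddSymbol.neg_self (ht : IsAddSymbol t) (u : Fˣ) : t u (-u) = 0 := by
  by_cases h1 : u = 1
  · subst h1; exact ht.one_left _
  have hu : (u : F) ≠ 1 := fun h => h1 (Units.ext h)
  have hui : ((u⁻¹ : Fˣ) : F) ≠ 1 := fun h => h1 (inv_eq_one.mp (Units.ext h))
  have hv0 : (1 : F) - (u : F) ≠ 0 := sub_ne_zero.mpr (Ne.symm hu)
  have hw0 : (1 : F) - ((u⁻¹ : Fˣ) : F) ≠ 0 := sub_ne_zero.mpr (Ne.symm hui)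
  set v : Fˣ := Units.mk0 _ hv0 with hv
  set w : Fˣ := Units.mk0 _ hw0 with hw
  have htv : t u v = 0 := ht.2.2 u v (by simp [hv])
  have htw : t u w = 0 := by
    have h := ht.1 u u⁻¹ w
    rw [mul_inv_cancel, ht.one_left] at h
    have h2 : t u⁻¹ w = 0 := ht.2.2 u⁻¹ w (by simp [hw])
    rw [h2, add_zero] at h
    exact h.symm
  have hneg : -u = v * w⁻¹ := by
    rw [Units.ext_iff]
    rw [Units.val_mul, Units.val_neg, Units.val_inv_eq_inv_val, hv, hw]
    simp only [Units.val_mk0]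
    have hu0 : (u : F) ≠ 0 := Units.ne_zero u
    rw [Units.val_inv_eq_inv_val] at hw0 ⊢
    rw [← div_eq_mul_inv, eq_comm, div_eq_iff hw0, neg_mul, mul_sub, mul_one,
      mul_inv_cancel₀ hu0]
    ring
  rw [hneg, ht.2.1, htv, zero_add, ht.inv_right, htw, neg_zero]

end Aux

/-- There is a (well-defined) group homomorphism `c : k(T)ˣ → kˣ` with
`c(f/g) = leadingCoeff f / leadingCoeff g` for nonzero polynomials `f, g`, and for every
symbol `t` on `k`, the map `(x, y) ↦ t(c x, c y)` is a symbol on `k(T)`. -/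
theorem ratFunc_leadingCoeff_symbol (k : Type*) [Field k] :
    ∃ c : (RatFunc k)ˣ →* kˣ,
      (∀ (x : (RatFunc k)ˣ) (f g : Polynomial k), f ≠ 0 → g ≠ 0 →
        (x : RatFunc k) =
          algebraMap (Polynomial k) (RatFunc k) f / algebraMap (Polynomial k) (RatFunc k) g →
        (c x : k) = f.leadingCoeff / g.leadingCoeff) ∧
      ∀ (A : Type*) [AddCommGroup A] (t : kˣ → kˣ → A), IsAddSymbol t →
        IsAddSymbol (fun x y : (RatFunc k)ˣ => t (c x) (c y)) := by
  classical
  set φ : Polynomial k →*₀ k :=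
    { toFun := Polynomial.leadingCoeff
      map_zero' := Polynomial.leadingCoeff_zero
      map_one' := Polynomial.leadingCoeff_one
      map_mul' := fun p q => Polynomial.leadingCoeff_mul p q } with hφdef
  have hφ : nonZeroDivisors (Polynomial k) ≤ Submonoid.comap φ (nonZeroDivisors k) := by
    intro p hp
    have hp' : p ≠ 0 := nonZeroDivisors.ne_zero hp
    refine Submonoid.mem_comap.mpr (mem_nonZeroDivisors_of_ne_zero ?_)
    simpa [hφdef, Polynomial.leadingCoeff_eq_zero] using hp'
  set L := RatFunc.liftMonoidWithZeroHom φ hφ with hLdef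
  set c : (RatFunc k)ˣ →* kˣ := Units.map L.toMonoidHom with hcdef
  have hcval : ∀ (x : (RatFunc k)ˣ) (f g : Polynomial k), f ≠ 0 → g ≠ 0 →
      (x : RatFunc k) =
        algebraMap (Polynomial k) (RatFunc k) f / algebraMap (Polynomial k) (RatFunc k) g →
      (c x : k) = f.leadingCoeff / g.leadingCoeff := by
    intro x f g hf hg hx
    have : (c x : k) = L (x : RatFunc k) := rfl
    rw [this, hx, RatFunc.liftMonoidWithZeroHom_apply_div]
    rfl
  refine ⟨c, hcval, ?_⟩
  intro A _ t ht
  refine ⟨?_, ?_, ?_⟩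
  · intro x x' y; simp only [map_mul]; exact ht.1 _ _ _
  · intro x y y'; simp only [map_mul]; exact ht.2.1 _ _ _
  · intro x y hxy
    simp only
    -- common denominator representation
    set xv := (x : RatFunc k) with hxv
    set yv := (y : RatFunc k) with hyv
    have hx0 : xv ≠ 0 := Units.ne_zero x
    have hy0 : yv ≠ 0 := Units.ne_zero y
    set f := xv.num * yv.denom with hfdef
    set g := yv.num * xv.denom with hgdef
    set h := xv.denom * yv.denom with hhdef
    have hf : f ≠ 0 := mul_ne_zero (RatFunc.num_ne_zero hx0) (RatFunc.denom_ne_zero _)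
    have hg : g ≠ 0 := mul_ne_zero (RatFunc.num_ne_zero hy0) (RatFunc.denom_ne_zero _)
    have hh : h ≠ 0 := mul_ne_zero (RatFunc.denom_ne_zero _) (RatFunc.denom_ne_zero _)
    have hdx : algebraMap (Polynomial k) (RatFunc k) xv.denom ≠ 0 :=
      RatFunc.algebraMap_ne_zero (RatFunc.denom_ne_zero _)
    have hdy : algebraMap (Polynomial k) (RatFunc k) yv.denom ≠ 0 :=
      RatFunc.algebraMap_ne_zero (RatFunc.denom_ne_zero _)
    have ex : algebraMap (Polynomial k) (RatFunc k) xv.num =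
        xv * algebraMap (Polynomial k) (RatFunc k) xv.denom :=
      (div_eq_iff hdx).mp (RatFunc.num_div_denom xv)
    have ey : algebraMap (Polynomial k) (RatFunc k) yv.num =
        yv * algebraMap (Polynomial k) (RatFunc k) yv.denom :=
      (div_eq_iff hdy).mp (RatFunc.num_div_denom yv)
    have hxrep : xv = algebraMap (Polynomial k) (RatFunc k) f /
        algebraMap (Polynomial k) (RatFunc k) h := by
      rw [hfdef, hhdef, map_mul, map_mul, mul_div_mul_right _ _ hdy, RatFunc.num_div_denom]
    have hyrep : yv = algebraMap (Polynomial k) (RatFunc k) g /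
        algebraMap (Polynomial k) (RatFunc k) h := by
      rw [hgdef, hhdef, map_mul, map_mul, mul_comm (algebraMap (Polynomial k) (RatFunc k) xv.denom),
        mul_div_mul_right _ _ hdx, RatFunc.num_div_denom]
    have key : f + g = h := by
      apply IsFractionRing.injective (Polynomial k) (RatFunc k)
      rw [map_add, hfdef, hgdef, hhdef, map_mul, map_mul, map_mul, ex, ey]
      linear_combination (algebraMap (Polynomial k) (RatFunc k) xv.denom *
        algebraMap (Polynomial k) (RatFunc k) yv.denom) * hxy
    have cx : (c x : k) = f.leadingCoeff / h.leadingCoeff := hcval x f h hf hh hxrep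
    have cy : (c y : k) = g.leadingCoeff / h.leadingCoeff := hcval y g h hg hh hyrep
    have hlf : f.leadingCoeff ≠ 0 := Polynomial.leadingCoeff_ne_zero.mpr hf
    have hlg : g.leadingCoeff ≠ 0 := Polynomial.leadingCoeff_ne_zero.mpr hg
    have hlh : h.leadingCoeff ≠ 0 := Polynomial.leadingCoeff_ne_zero.mpr hh
    rcases lt_trichotomy f.degree g.degree with hdeg | hdeg | hdeg
    · -- c y = 1
      have : h.leadingCoeff = g.leadingCoeff := by
        rw [← key]; exact Polynomial.leadingCoeff_add_of_degree_lt hdeg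
      have hcy1 : c y = 1 := by
        apply Units.ext
        rw [cy, this, div_self hlg, Units.val_one]
      rw [hcy1]; exact ht.one_right _
    · by_cases hab : f.leadingCoeff + g.leadingCoeff = 0
      · -- c y = - c x
        have hba : g.leadingCoeff = - f.leadingCoeff := eq_neg_of_add_eq_zero_right hab
        have hcyneg : c y = - (c x) := by
          apply Units.ext
          rw [Units.val_neg, cy, cx, hba, neg_div]
        rw [hcyneg]; exact ht.neg_self _
      · have hlch : h.leadingCoeff = f.leadingCoeff + g.leadingCoeff := by
          rw [← key]; exact Polynomial.leadingCoeff_add_of_degree_eq hdeg hab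
        apply ht.2.2
        rw [cx, cy, hlch, ← add_div, div_self hab]
    · -- c x = 1
      have : h.leadingCoeff = f.leadingCoeff := by
        rw [← key]; exact Polynomial.leadingCoeff_add_of_degree_lt' hdeg
      have hcx1 : c x = 1 := by
        apply Units.ext
        rw [cx, this, div_self hlf, Units.val_one]
      rw [hcx1]; exact ht.one_left _
end

section
/- Let F be a field, Ω¹_F = Ω_{F/ℤ} its module of Kähler differentials over ℤ with universal derivation d : F → Ω¹_F, and Ω²_F = ⋀²_F Ω¹_F the second exterior power over F. Then the map dlog₂ : Fˣ × Fˣ → Ω²_F defined by dlog₂(x, y) = (x⁻¹ · d x) ∧ (y⁻¹ · d y) is an Ω²_F-valued symbol on F: it is ℤ-bilinear and dlog₂(x, y) = 0 whenever x + y = 1. -/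
/-- The element `dlog₂(x, y) = (x⁻¹ dx) ∧ (y⁻¹ dy)` of `Ω²_F = ⋀²_F Ω_{F/ℤ}`. -/
noncomputable def dlog2 (F : Type*) [Field F] (x y : Fˣ) :
    ⋀[F]^2 (KaehlerDifferential ℤ F) :=
  ⟨ExteriorAlgebra.ιMulti F 2
      ![(x : F)⁻¹ • KaehlerDifferential.D ℤ F (x : F),
        (y : F)⁻¹ • KaehlerDifferential.D ℤ F (y : F)],
    ExteriorAlgebra.ιMulti_range F 2 (Set.mem_range_self _)⟩

/-- The logarithmic derivative `x⁻¹ dx`. -/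
noncomputable def dlog (F : Type*) [Field F] (x : Fˣ) : KaehlerDifferential ℤ F :=
  (x : F)⁻¹ • KaehlerDifferential.D ℤ F (x : F)

lemma dlog_mul (F : Type*) [Field F] (x y : Fˣ) :
    dlog F (x * y) = dlog F x + dlog F y := by
  have hx : (x : F) ≠ 0 := x.ne_zero
  have hy : (y : F) ≠ 0 := y.ne_zero
  simp only [dlog, Units.val_mul, Derivation.leibniz, smul_add, smul_smul]
  rw [show ((x:F)*(y:F))⁻¹ * (x:F) = (y:F)⁻¹ by field_simp,
    show ((x:F)*(y:F))⁻¹ * (y:F) = (x:F)⁻¹ by field_simp]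
  abel

lemma ιMulti2 (F : Type*) [Field F] (a b : KaehlerDifferential ℤ F) :
    ExteriorAlgebra.ιMulti F 2 ![a, b] =
      ExteriorAlgebra.ι F a * ExteriorAlgebra.ι F b := by
  rw [ExteriorAlgebra.ιMulti_apply]
  simp [List.ofFn, Fin.foldr_succ]

/-- The map `dlog₂(x, y) = (x⁻¹ dx) ∧ (y⁻¹ dy)` is an `Ω²_F`-valued symbol on `F`. -/
theorem dlog2_isAddSymbol (F : Type*) [Field F] :
    IsAddSymbol (fun x y : Fˣ => dlog2 F x y) := by
  have key : ∀ x y : Fˣ, (dlog2 F x y : ExteriorAlgebra F (KaehlerDifferential ℤ F)) =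
      ExteriorAlgebra.ι F (dlog F x) * ExteriorAlgebra.ι F (dlog F y) := fun x y =>
    ιMulti2 F _ _
  refine ⟨fun x x' y => ?_, fun x y y' => ?_, fun x y h => ?_⟩
  · apply Subtype.ext
    push_cast [key]
    rw [dlog_mul, map_add, add_mul]
  · apply Subtype.ext
    push_cast [key]
    rw [dlog_mul, map_add, mul_add]
  · apply Subtype.ext
    rw [key]
    have hDx : KaehlerDifferential.D ℤ F (x : F) = - KaehlerDifferential.D ℤ F (y : F) := by
      have := congrArg (KaehlerDifferential.D ℤ F) h
      rw [map_add] at this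
      simp at this
      linear_combination (norm := module) this
    rw [show dlog F x = (-(x : F)⁻¹) • KaehlerDifferential.D ℤ F (y : F) by
      simp [dlog, hDx]]
    rw [show dlog F y = (y : F)⁻¹ • KaehlerDifferential.D ℤ F (y : F) from rfl]
    simp only [map_smul, smul_mul_assoc, mul_smul_comm, ExteriorAlgebra.ι_sq_zero]
    simp
end

section
/- Let x, y ∈ ℚ be nonzero. The conic x·R² + y·S² = 1 has a solution (R, S) ∈ ℚ × ℚ if and only if it has a solution over ℝ and a solution over ℚ_p for every prime p (including p = 2). -/
section FieldLemmas

variable {K : Type*} [Field K] [CharZero K]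

/-- `y` is a value of the norm form `u² − x·v²`. -/
def NormRep (x y : K) : Prop := ∃ u v : K, u ^ 2 - x * v ^ 2 = y

lemma rep_of_sol {x y : K} (hy : y ≠ 0) :
    (∃ R S : K, x * R ^ 2 + y * S ^ 2 = 1) → NormRep x y := by
  rintro ⟨R, S, h⟩
  by_cases hS : S = 0
  · subst hS
    have hx : x * R ^ 2 = 1 := by linear_combination h
    exact ⟨(y + 1) / 2, (y - 1) / 2 * R, by linear_combination (-(y-1)^2/4) * hx⟩
  · refine ⟨1 / S, R / S, ?_⟩
    field_simp
    linear_combination -h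

lemma sol_of_rep {x y : K} (hx : x ≠ 0) (hy : y ≠ 0) :
    NormRep x y → (∃ R S : K, x * R ^ 2 + y * S ^ 2 = 1) := by
  rintro ⟨u, v, huv⟩
  by_cases hu : u = 0
  · subst hu
    have hv : v ≠ 0 := by rintro rfl; rw [← huv] at hy; simp at hy
    refine ⟨(1 + 1 / x) / 2, (1 / x - 1) / (2 * v), ?_⟩
    have hyy : y = -(x * v ^ 2) := by linear_combination -huv
    subst hyy
    field_simp
    ring
  · refine ⟨v / u, 1 / u, ?_⟩
    field_simp
    linear_combination -huv

lemma sol_iff_rep {x y : K} (hx : x ≠ 0) (hy : y ≠ 0) :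
    (∃ R S : K, x * R ^ 2 + y * S ^ 2 = 1) ↔ NormRep x y :=
  ⟨rep_of_sol hy, sol_of_rep hx hy⟩

lemma rep_mul {x y z : K} : NormRep x y → NormRep x z → NormRep x (y * z) := by
  rintro ⟨u, v, rfl⟩ ⟨s, t, rfl⟩
  exact ⟨u * s + x * v * t, u * t + v * s, by ring⟩

lemma rep_mul_sq {x y : K} (k : K) : NormRep x y → NormRep x (y * k ^ 2) := by
  rintro ⟨u, v, rfl⟩
  exact ⟨u * k, v * k, by ring⟩

lemma rep_cancel {x y z : K} (hy : y ≠ 0) (h1 : NormRep x y) (h2 : NormRep x (y * z)) :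
    NormRep x z := by
  have h3 := rep_mul_sq (1 / y) (rep_mul h2 h1)
  have e : y * z * y * (1 / y) ^ 2 = z := by field_simp
  rwa [e] at h3

lemma sol_symm {x y : K} :
    (∃ R S : K, x * R ^ 2 + y * S ^ 2 = 1) ↔ (∃ R S : K, y * R ^ 2 + x * S ^ 2 = 1) := by
  constructor <;> rintro ⟨R, S, h⟩ <;> exact ⟨S, R, by linear_combination h⟩

lemma sol_scale {x y : K} (s : K) (hs : s ≠ 0) :
    (∃ R S : K, x * R ^ 2 + y * S ^ 2 = 1) ↔
      (∃ R S : K, (x * s ^ 2) * R ^ 2 + y * S ^ 2 = 1) := by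
  constructor <;> rintro ⟨R, S, h⟩
  · refine ⟨R / s, S, ?_⟩
    field_simp
    linear_combination h
  · exact ⟨s * R, S, by linear_combination h⟩

end FieldLemmas


open Padic in
lemma padic_local_square {p : ℕ} [hp : Fact p.Prime] {a b : ℤ}
    (ha : ¬ (p:ℤ) ∣ a) (hb1 : (p:ℤ) ∣ b) (hb2 : ¬ (p:ℤ)^2 ∣ b)
    (h : ∃ u v : ℚ_[p], u ^ 2 - (a:ℚ_[p]) * v ^ 2 = (b:ℚ_[p])) :
    IsSquare (a : ZMod p) := by
  have hb0 : b ≠ 0 := by rintro rfl; exact hb2 (dvd_zero _)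
  have ha0 : a ≠ 0 := fun h0 => ha (h0 ▸ dvd_zero _)
  have haq : (a:ℚ_[p]) ≠ 0 := Int.cast_ne_zero.mpr ha0
  have hbq : (b:ℚ_[p]) ≠ 0 := Int.cast_ne_zero.mpr hb0
  obtain ⟨u, v, huv⟩ := h
  have hvb : (b:ℚ_[p]).valuation = 1 := by
    rw [Padic.valuation_intCast]
    have h1 : 1 ≤ padicValInt p b := by
      rcases (padicValInt_dvd_iff 1 b).mp (by simpa using hb1) with h' | h'
      · exact absurd h' hb0
      · exact h'
    have h2 : ¬ 2 ≤ padicValInt p b := fun hh => hb2 ((padicValInt_dvd_iff 2 b).mpr (Or.inr hh))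
    omega
  have hva : (a:ℚ_[p]).valuation = 0 := by
    rw [Padic.valuation_intCast, padicValInt.eq_zero_of_not_dvd ha, Int.natCast_zero]
  have hvneg : ∀ x : ℚ_[p], x ≠ 0 → (-x).valuation = x.valuation := by
    intro x hx
    have hm1 : ((-1 : ℤ) : ℚ_[p]) = -1 := by push_cast; ring
    have : (-x) = ((-1 : ℤ) : ℚ_[p]) * x := by rw [hm1]; ring
    rw [this, Padic.valuation_mul (by rw [hm1]; norm_num) hx, Padic.valuation_intCast]
    simp [padicValInt]
  have hu : u ≠ 0 := by
    rintro rfl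
    have hv : v ≠ 0 := by rintro rfl; simp at huv; exact hbq huv.symm
    have : (-(( a:ℚ_[p]) * v ^ 2)).valuation = 1 := by rw [← hvb, ← huv]; ring_nf
    rw [hvneg _ (mul_ne_zero haq (pow_ne_zero 2 hv)), sq (v), Padic.valuation_mul haq (mul_ne_zero hv hv),
      Padic.valuation_mul hv hv, hva] at this
    omega
  have hv : v ≠ 0 := by
    rintro rfl
    have : (u ^ 2).valuation = 1 := by rw [← hvb, ← huv]; ring_nf
    rw [sq, Padic.valuation_mul hu hu] at this
    omega
  set m : ℤ := min u.valuation v.valuation with hmdef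
  have h2m : 2 * m ≤ 1 := by
    have hne : u ^ 2 + -((a:ℚ_[p]) * v ^ 2) ≠ 0 := by
      rw [← sub_eq_add_neg, huv]; exact hbq
    have := Padic.le_valuation_add hne
    rw [← sub_eq_add_neg, huv, hvb, sq, Padic.valuation_mul hu hu,
      hvneg _ (mul_ne_zero haq (pow_ne_zero 2 hv)), sq (v), Padic.valuation_mul haq (mul_ne_zero hv hv),
      Padic.valuation_mul hv hv, hva] at this
    simp only [le_min_iff, min_le_iff] at this ⊢
    omega
  have hm0 : m ≤ 0 := by omega
  set k : ℕ := (-m).toNat with hkdef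
  have hk : (k : ℤ) = -m := Int.toNat_of_nonneg (by omega)
  set c : ℚ_[p] := ((p ^ k : ℕ) : ℚ_[p]) with hcdef
  have hc0 : c ≠ 0 := by
    rw [hcdef]
    exact_mod_cast Nat.cast_ne_zero.mpr (pow_ne_zero k hp.out.pos.ne')
  have hvc : c.valuation = k := by
    rw [hcdef, Padic.valuation_natCast, padicValNat.prime_pow]
  -- scaled elements
  have hvu0 : 0 ≤ (u * c).valuation := by
    rw [Padic.valuation_mul hu hc0, hvc]; omega
  have hvv0 : 0 ≤ (v * c).valuation := by
    rw [Padic.valuation_mul hv hc0, hvc]; omega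
  set U : ℤ_[p] := ⟨u * c, (Padic.norm_le_one_iff_val_nonneg _).mpr hvu0⟩ with hU
  set V : ℤ_[p] := ⟨v * c, (Padic.norm_le_one_iff_val_nonneg _).mpr hvv0⟩ with hV
  set B : ℤ_[p] := (b : ℤ_[p]) * ((p : ℤ_[p]) ^ k) ^ 2 with hB
  have hEq : U ^ 2 - (a : ℤ_[p]) * V ^ 2 = B := by
    apply Subtype.ext
    simp only [hU, hV, hB, hcdef] at *
    push_cast
    erw [PadicInt.coe_pow, PadicInt.coe_pow]
    linear_combination (((p:ℚ_[p]) ^ k) ^ 2) * huv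
  have hmin : (0:ℤ) = min (u * c).valuation (v * c).valuation := by
    rw [Padic.valuation_mul hu hc0, Padic.valuation_mul hv hc0, hvc]
    omega
  -- pass to ZMod p
  have hBz : PadicInt.toZMod B = 0 := by
    rw [hB]
    rcases Nat.eq_zero_or_pos k with hk0 | hk0
    · simp only [hk0, pow_zero, one_pow, mul_one, map_intCast]
      exact (ZMod.intCast_zmod_eq_zero_iff_dvd b p).mpr hb1
    · have : PadicInt.toZMod ((p : ℤ_[p])) = 0 := by
        rw [map_natCast]
        exact (ZMod.natCast_self p)
      rw [map_mul, map_pow, map_pow, this, zero_pow (by omega), zero_pow (by norm_num), mul_zero]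
  have key : (PadicInt.toZMod U) ^ 2 = (a : ZMod p) * (PadicInt.toZMod V) ^ 2 := by
    have := congrArg PadicInt.toZMod hEq
    rw [map_sub, map_mul, map_pow, map_pow, map_intCast, hBz, sub_eq_zero] at this
    exact this
  -- V is a unit mod p
  have hdvd_iff : ∀ (W : ℤ_[p]), (W : ℚ_[p]) ≠ 0 → PadicInt.toZMod W = 0 → 1 ≤ (W.valuation : ℤ) := by
    intro W hW0 hWz
    have hker : W ∈ RingHom.ker (PadicInt.toZMod (p := p)) := hWz
    rw [PadicInt.ker_toZMod, PadicInt.maximalIdeal_eq_span_p, ← pow_one ((p : ℤ_[p]))] at hker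
    have hWne : W ≠ 0 := fun hh => hW0 (by rw [hh]; simp)
    exact_mod_cast (PadicInt.mem_span_pow_iff_le_valuation W hWne 1).mp (by simpa using hker)
  have hVz : PadicInt.toZMod V ≠ 0 := by
    intro hVz
    have hUz : PadicInt.toZMod U = 0 := by
      have : (PadicInt.toZMod U) ^ 2 = 0 := by rw [key, hVz]; ring
      exact pow_eq_zero_iff (by norm_num) |>.mp this
    have h1 := hdvd_iff U (mul_ne_zero hu hc0) hUz
    have h2 := hdvd_iff V (mul_ne_zero hv hc0) hVz
    have e1 : U.valuation = (u * c).valuation := (PadicInt.valuation_coe U).symm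
    have e2 : V.valuation = (v * c).valuation := (PadicInt.valuation_coe V).symm
    rw [e1] at h1; rw [e2] at h2
    omega
  refine ⟨PadicInt.toZMod U * (PadicInt.toZMod V)⁻¹, ?_⟩
  field_simp
  linear_combination -key


lemma isSquare_zmod_of_forall_prime (a : ℤ) : ∀ m : ℕ, Squarefree m →
    (∀ q : ℕ, q.Prime → q ∣ m → IsSquare (a : ZMod q)) → IsSquare (a : ZMod m) := by
  intro m
  induction m using Nat.strong_induction_on with
  | _ m ih =>
    intro hsf hq
    rcases lt_or_ge m 2 with hm | hm
    · interval_cases m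
      · exact absurd hsf not_squarefree_zero
      · exact ⟨0, Subsingleton.elim _ _⟩
    · have hp : m.minFac.Prime := Nat.minFac_prime (by omega)
      obtain ⟨n, hn⟩ := m.minFac_dvd
      set p := m.minFac with hpd
      have hn0 : n ≠ 0 := by rintro rfl; simp at hn; omega
      have hpn : ¬ p ∣ n := by
        intro hd
        exact hp.not_isUnit (hsf p (by rw [hn]; exact mul_dvd_mul_left p hd))
      have hco : Nat.Coprime p n := hp.coprime_iff_not_dvd.mpr hpn
      have hsq1 : IsSquare (a : ZMod p) := hq p hp ⟨n, hn⟩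
      have hnm : n < m := by
        have h2 : 2 ≤ p := hp.two_le
        have : 0 < n := Nat.pos_of_ne_zero hn0
        calc n < 2 * n := by omega
        _ ≤ p * n := Nat.mul_le_mul_right n h2
        _ = m := hn.symm
      have hsq2 : IsSquare (a : ZMod n) :=
        ih n hnm (hsf.squarefree_of_dvd ⟨p, by rw [hn]; ring⟩)
          (fun q hq' hd => hq q hq' (hd.trans ⟨p, by rw [hn]; ring⟩))
      rw [hn]
      obtain ⟨r, hr⟩ := hsq1
      obtain ⟨s, hs⟩ := hsq2
      let e := ZMod.chineseRemainder hco
      refine ⟨e.symm (r, s), ?_⟩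
      apply e.injective
      have hcast : e ((a : ℤ) : ZMod (p * n)) = ((a : ZMod p), (a : ZMod n)) := by
        have h1 := map_intCast (e : ZMod (p * n) →+* ZMod p × ZMod n) a
        have h2 : ((a : ℤ) : ZMod p × ZMod n) = ((a : ZMod p), (a : ZMod n)) := by
          ext <;> simp
        rw [← h2]
        exact h1
      rw [hcast, map_mul, RingEquiv.apply_symm_apply]
      exact Prod.ext (by simpa using hr) (by simpa using hs)

lemma int_sq_mul_squarefree (c : ℤ) (hc : c ≠ 0) :
    ∃ d k : ℤ, k ≠ 0 ∧ Squarefree d ∧ d * k ^ 2 = c := by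
  obtain ⟨m, k, hmk, hm⟩ := Nat.sq_mul_squarefree c.natAbs
  have hc' : c.natAbs ≠ 0 := fun hh => hc (Int.natAbs_eq_zero.mp hh)
  have hk0 : (k : ℤ) ≠ 0 := by
    simp only [Ne, Nat.cast_eq_zero]
    rintro rfl
    rw [← hmk] at hc'
    simp at hc'
  rcases Int.natAbs_eq c with hcc | hcc
  · exact ⟨(m : ℤ), (k : ℤ), hk0, Int.squarefree_natCast.mpr hm,
      by rw [hcc, ← hmk]; push_cast; ring⟩
  · refine ⟨-(m : ℤ), (k : ℤ), hk0, ?_, by rw [hcc, ← hmk]; push_cast; ring⟩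
    rw [← Int.squarefree_natAbs]
    simpa using hm

lemma rep_descend {K : Type*} [Field K] [CharZero K] {a b d kk t : ℤ}
    (h : b * (d * kk ^ 2) = t ^ 2 - a) (ha : a ≠ 0) (hb : b ≠ 0) (hd : d ≠ 0) (hk : kk ≠ 0) :
    (∃ R S : K, (a:K) * R ^ 2 + (b:K) * S ^ 2 = 1) ↔
      (∃ R S : K, (a:K) * R ^ 2 + (d:K) * S ^ 2 = 1) := by
  have haK : (a : K) ≠ 0 := Int.cast_ne_zero.mpr ha
  have hbK : (b : K) ≠ 0 := Int.cast_ne_zero.mpr hb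
  have hdK : (d : K) ≠ 0 := Int.cast_ne_zero.mpr hd
  have hkK : (kk : K) ≠ 0 := Int.cast_ne_zero.mpr hk
  have hq : (b:K) * ((d:K) * (kk:K) ^ 2) = (t:K) ^ 2 - (a:K) := by
    have := congrArg (fun z : ℤ => (z : K)) h
    push_cast at this
    exact this
  have hrepbd : NormRep (a : K) ((b : K) * ((d : K) * (kk : K) ^ 2)) :=
    ⟨(t : K), 1, by linear_combination -hq⟩
  rw [sol_iff_rep haK hbK, sol_iff_rep haK hdK]
  constructor
  · intro hrb
    have h1 : NormRep (a:K) ((d:K) * (kk:K)^2) := rep_cancel hbK hrb hrepbd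
    have h2 := rep_mul_sq ((1:K) / kk) h1
    have e : (d:K) * (kk:K)^2 * (1/(kk:K))^2 = (d:K) := by field_simp
    rwa [e] at h2
  · intro hrd
    have h1 : NormRep (a:K) ((d:K) * (kk:K)^2) := rep_mul_sq _ hrd
    have h2 : NormRep (a:K) ((d:K) * (kk:K)^2 * (b:K)) := by
      rw [mul_comm ((d:K) * (kk:K)^2) (b:K)]
      exact hrepbd
    exact rep_cancel (mul_ne_zero hdK (pow_ne_zero 2 hkK)) h1 h2

/-- The main descent. -/
lemma descent_s17 (n : ℕ) : ∀ a b : ℤ, Squarefree a → Squarefree b →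
    a.natAbs + b.natAbs ≤ n →
    (∃ R S : ℝ, (a:ℝ) * R ^ 2 + (b:ℝ) * S ^ 2 = 1) →
    (∀ (p : ℕ) [Fact p.Prime], ∃ R S : ℚ_[p], (a:ℚ_[p]) * R ^ 2 + (b:ℚ_[p]) * S ^ 2 = 1) →
    ∃ R S : ℚ, (a:ℚ) * R ^ 2 + (b:ℚ) * S ^ 2 = 1 := by
  induction n using Nat.strong_induction_on with
  | _ n ih =>
  -- first prove the ordered version
  suffices key : ∀ a b : ℤ, Squarefree a → Squarefree b → a.natAbs ≤ b.natAbs →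
      a.natAbs + b.natAbs ≤ n →
      (∃ R S : ℝ, (a:ℝ) * R ^ 2 + (b:ℝ) * S ^ 2 = 1) →
      (∀ (p : ℕ) [Fact p.Prime], ∃ R S : ℚ_[p], (a:ℚ_[p]) * R ^ 2 + (b:ℚ_[p]) * S ^ 2 = 1) →
      ∃ R S : ℚ, (a:ℚ) * R ^ 2 + (b:ℚ) * S ^ 2 = 1 by
    intro a b hsa hsb hsum hR hP
    rcases le_or_gt a.natAbs b.natAbs with hab | hab
    · exact key a b hsa hsb hab hsum hR hP
    · have := key b a hsb hsa hab.le (by omega) (sol_symm.mp hR)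
        (fun p _ => sol_symm.mp (hP p))
      exact sol_symm.mp this
  intro a b hsa hsb hab hsum hR hP
  have ha0 : a ≠ 0 := hsa.ne_zero
  have hb0 : b ≠ 0 := hsb.ne_zero
  by_cases ha1 : a = 1
  · exact ⟨1, 0, by rw [ha1]; norm_num⟩
  rcases le_or_gt b.natAbs 1 with hb1 | hb2
  · -- |b| = 1, so |a| = 1 : a = -1, b = ± 1
    have hamone : a = -1 := by
      have := Int.natAbs_eq a
      omega
    rcases (by omega : b = 1 ∨ b = -1) with rfl | rfl
    · exact ⟨0, 1, by rw [hamone]; norm_num⟩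
    · exfalso
      obtain ⟨R, S, hRS⟩ := hR
      rw [hamone] at hRS
      push_cast at hRS
      nlinarith [sq_nonneg R, sq_nonneg S]
  -- main case : |b| ≥ 2
  set N : ℤ := (b.natAbs : ℤ) with hN
  have hN2 : 2 ≤ N := by omega
  have hNb : N ∣ b := by rw [hN]; exact Int.natAbs_dvd.mpr dvd_rfl
  -- a is a square modulo every prime dividing b
  have hA : ∀ q : ℕ, q.Prime → q ∣ b.natAbs → IsSquare ((a : ℤ) : ZMod q) := by
    intro q hq hqd
    haveI := Fact.mk hq
    have hqb : (q:ℤ) ∣ b := (Int.natCast_dvd_natCast.mpr hqd).trans hNb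
    by_cases hqa : (q:ℤ) ∣ a
    · obtain ⟨w, hw⟩ := hqa
      refine ⟨0, ?_⟩
      rw [mul_zero]
      exact (ZMod.intCast_zmod_eq_zero_iff_dvd a q).mpr (by exact ⟨w, hw⟩)
    · refine padic_local_square hqa hqb ?_ ?_
      · intro hq2
        have : ¬ IsUnit (q:ℤ) := (Int.prime_iff_natAbs_prime.mpr (by simpa using hq)).not_unit
        exact this (hsb q (by rw [← sq]; exact hq2))
      · have hbq : ((b:ℤ) : ℚ_[q]) ≠ 0 := Int.cast_ne_zero.mpr hb0
        exact rep_of_sol hbq (hP q)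
  have hsqN : IsSquare ((a : ℤ) : ZMod b.natAbs) :=
    isSquare_zmod_of_forall_prime a b.natAbs (Int.squarefree_natAbs.mpr hsb) hA
  -- extract an integer square root r of a mod b
  haveI : NeZero b.natAbs := ⟨fun hh => hb0 (Int.natAbs_eq_zero.mp hh)⟩
  obtain ⟨s, hs⟩ := hsqN
  have hrmod : N ∣ ((s.val : ℤ)) ^ 2 - a := by
    have h0 : ((((s.val : ℤ)) ^ 2 - a : ℤ) : ZMod b.natAbs) = 0 := by
      push_cast
      rw [ZMod.natCast_val, ZMod.cast_id, hs]
      ring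
    rw [hN]
    exact_mod_cast (ZMod.intCast_zmod_eq_zero_iff_dvd _ _).mp h0
  set r : ℤ := (s.val : ℤ) with hrdef
  -- renormalize to t with 4 t² ≤ N²
  obtain ⟨t, htmod, htbound⟩ : ∃ t : ℤ, N ∣ t ^ 2 - a ∧ 4 * t ^ 2 ≤ N ^ 2 := by
    set t₀ : ℤ := r % N with ht₀
    have h0le : 0 ≤ t₀ := Int.emod_nonneg r (by omega)
    have hlt : t₀ < N := Int.emod_lt_of_pos r (by omega)
    have hdm := Int.mul_ediv_add_emod r N
    have hdiff : N ∣ r - t₀ := ⟨r / N, by omega⟩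
    have hsqcong : ∀ u : ℤ, N ∣ u - r → N ∣ u ^ 2 - a := by
      intro u hu
      have h1 : N ∣ u ^ 2 - r ^ 2 := by
        have e : u ^ 2 - r ^ 2 = (u - r) * (u + r) := by ring
        rw [e]
        exact Dvd.dvd.mul_right hu _
      have h2 := dvd_add h1 hrmod
      simpa using h2
    rcases le_or_gt (2 * t₀) N with hcase | hcase
    · refine ⟨t₀, hsqcong t₀ ?_, by nlinarith⟩
      rw [show t₀ - r = -(r - t₀) by ring]
      exact dvd_neg.mpr hdiff
    · refine ⟨t₀ - N, hsqcong (t₀ - N) ?_, by nlinarith⟩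
      rw [show (t₀ - N) - r = -(r - t₀) - N by ring]
      exact dvd_sub (dvd_neg.mpr hdiff) dvd_rfl
  -- if t² = a we are in the square case, impossible since a ≠ 1 and a squarefree
  have hta : t ^ 2 - a ≠ 0 := by
    intro hta
    have haeq : a = t * t := by nlinarith [hta]
    have hu : IsUnit t := hsa t (by rw [haeq])
    rcases Int.isUnit_iff.mp hu with rfl | rfl
    · exact ha1 (by omega)
    · exact ha1 (by omega)
  -- the descent step
  obtain ⟨c, hc⟩ := Int.natAbs_dvd.mp (hN ▸ htmod)
  have hc0 : c ≠ 0 := by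
    rintro rfl
    rw [mul_zero] at hc
    exact hta hc
  obtain ⟨d, k, hk0, hsd, hdk⟩ := int_sq_mul_squarefree c hc0
  have hd0 : d ≠ 0 := hsd.ne_zero
  have hbd : b * (d * k ^ 2) = t ^ 2 - a := by rw [hdk, ← hc]
  -- size bound : |d| < |b|
  have hdb : d.natAbs < b.natAbs := by
    have h1 : |t ^ 2 - a| ≤ t ^ 2 + |a| := by
      calc |t ^ 2 - a| ≤ |t ^ 2| + |a| := abs_sub _ _
      _ = t ^ 2 + |a| := by rw [abs_of_nonneg (sq_nonneg t)]
    have h2 : |a| ≤ N := by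
      rw [Int.abs_eq_natAbs, hN]
      exact_mod_cast hab
    have h3 : N * |c| = |t ^ 2 - a| := by
      rw [hc, abs_mul, Int.abs_eq_natAbs b, hN]
    have h4 : |d| ≤ |c| := by
      have e : |c| = |d| * k ^ 2 := by
        rw [← hdk, abs_mul, abs_of_nonneg (sq_nonneg k)]
      have hk1 : 1 ≤ k ^ 2 := by
        rcases lt_or_gt_of_ne hk0 with h | h <;> nlinarith
      nlinarith [abs_nonneg d]
    have h5 : |d| < N := by nlinarith [abs_nonneg c, abs_nonneg d]
    rw [Int.abs_eq_natAbs, hN] at h5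
    exact_mod_cast h5
  -- apply induction hypothesis to (a, d)
  have hsol : ∃ R S : ℚ, (a:ℚ) * R ^ 2 + (d:ℚ) * S ^ 2 = 1 := by
    refine ih (a.natAbs + d.natAbs) (by omega) a d hsa hsd le_rfl ?_ ?_
    · exact (rep_descend hbd ha0 hb0 hd0 hk0).mp hR
    · intro p hp
      exact (rep_descend hbd ha0 hb0 hd0 hk0).mp (hP p)
  exact (rep_descend hbd ha0 hb0 hd0 hk0).mpr hsol

lemma rat_squareclass (x : ℚ) (hx : x ≠ 0) :
    ∃ (a : ℤ) (s : ℚ), Squarefree a ∧ s ≠ 0 ∧ x = (a : ℚ) * s ^ 2 := by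
  have hnum : x.num ≠ 0 := Rat.num_ne_zero.mpr hx
  have hden : (x.den : ℤ) ≠ 0 := by
    have := x.den_nz
    exact_mod_cast this
  obtain ⟨d, k, hk, hd, hdk⟩ := int_sq_mul_squarefree (x.num * (x.den : ℤ))
    (mul_ne_zero hnum hden)
  refine ⟨d, (k : ℚ) / ((x.den : ℤ) : ℚ), hd, ?_, ?_⟩
  · exact div_ne_zero (Int.cast_ne_zero.mpr hk) (Int.cast_ne_zero.mpr hden)
  · have hcast : ((d : ℚ)) * (k : ℚ) ^ 2 = (x.num : ℚ) * ((x.den : ℤ) : ℚ) := by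
      exact_mod_cast congrArg (fun z : ℤ => (z : ℚ)) hdk
    have hdenQ : ((x.den : ℤ) : ℚ) ≠ 0 := Int.cast_ne_zero.mpr hden
    have hx2 : (x.num : ℚ) / ((x.den : ℤ) : ℚ) = x := by exact_mod_cast Rat.num_div_den x
    calc x = (x.num : ℚ) / ((x.den : ℤ) : ℚ) := hx2.symm
      _ = ((x.num : ℚ) * ((x.den : ℤ) : ℚ)) / (((x.den : ℤ) : ℚ)) ^ 2 := by
          field_simp
      _ = ((d : ℚ) * (k : ℚ) ^ 2) / (((x.den : ℤ) : ℚ)) ^ 2 := by rw [hcast]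
      _ = (d : ℚ) * ((k : ℚ) / ((x.den : ℤ) : ℚ)) ^ 2 := by rw [div_pow]; ring


/-- (Local-to-global principle for conics over `ℚ`.) For nonzero rationals `x, y`, the
conic `x·R² + y·S² = 1` has a rational solution iff it has a solution over `ℝ` and over
`ℚ_p` for every prime `p`. -/
theorem rat_conic_hasse_principle (x y : ℚ) (hx : x ≠ 0) (hy : y ≠ 0) :
    (∃ R S : ℚ, x * R ^ 2 + y * S ^ 2 = 1) ↔
      ((∃ R S : ℝ, (x : ℝ) * R ^ 2 + (y : ℝ) * S ^ 2 = 1) ∧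
        ∀ (p : ℕ) [Fact p.Prime],
          ∃ R S : ℚ_[p], (x : ℚ_[p]) * R ^ 2 + (y : ℚ_[p]) * S ^ 2 = 1) := by
  obtain ⟨a, s, hsa, hs0, hxa⟩ := rat_squareclass x hx
  obtain ⟨b, w, hsb, hw0, hyb⟩ := rat_squareclass y hy
  have key : ∀ (K : Type) [Field K] [CharZero K],
      ((∃ R S : K, (x : K) * R ^ 2 + (y : K) * S ^ 2 = 1) ↔
        (∃ R S : K, (a : K) * R ^ 2 + (b : K) * S ^ 2 = 1)) := by
    intro K _ _
    have hsK : ((s : K)) ≠ 0 := Rat.cast_ne_zero.mpr hs0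
    have hwK : ((w : K)) ≠ 0 := Rat.cast_ne_zero.mpr hw0
    have hx' : (x : K) = (a : K) * (s : K) ^ 2 := by
      have := congrArg (fun q : ℚ => (q : K)) hxa
      push_cast at this
      exact this
    have hy' : (y : K) = (b : K) * (w : K) ^ 2 := by
      have := congrArg (fun q : ℚ => (q : K)) hyb
      push_cast at this
      exact this
    rw [hx', hy']
    calc (∃ R S : K, ((a:K) * (s:K)^2) * R ^ 2 + ((b:K) * (w:K)^2) * S ^ 2 = 1)
        ↔ (∃ R S : K, (a:K) * R ^ 2 + ((b:K) * (w:K)^2) * S ^ 2 = 1) :=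
          (sol_scale (s : K) hsK).symm
      _ ↔ (∃ R S : K, ((b:K) * (w:K)^2) * R ^ 2 + (a:K) * S ^ 2 = 1) := sol_symm
      _ ↔ (∃ R S : K, (b:K) * R ^ 2 + (a:K) * S ^ 2 = 1) := (sol_scale (w : K) hwK).symm
      _ ↔ (∃ R S : K, (a:K) * R ^ 2 + (b:K) * S ^ 2 = 1) := sol_symm
  constructor
  · rintro ⟨R, S, h⟩
    have lift : ∀ (K : Type) [Field K] [CharZero K],
        ∃ R' S' : K, (x : K) * R' ^ 2 + (y : K) * S' ^ 2 = 1 := by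
      intro K _ _
      refine ⟨(R : K), (S : K), ?_⟩
      have := congrArg (fun q : ℚ => (q : K)) h
      push_cast at this
      exact this
    exact ⟨lift ℝ, fun p _ => lift ℚ_[p]⟩
  · rintro ⟨hR, hP⟩
    refine (key ℚ).mpr ?_
    refine descent_s17 (a.natAbs + b.natAbs) a b hsa hsb le_rfl ?_ ?_
    · exact (key ℝ).mp hR
    · intro p hp
      exact (key ℚ_[p]).mp (hP p)
end
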